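/- arXiv:1703.02776 — 3 statements merged into one kernel-verified Lean document; each statement's English description precedes it below -/
import Mathlib

section
/- Let q, x ∈ ℂ with |q| < 1 and |q| < |x| < 1. Then the two series below converge absolutely and exp( −∑_{m≥1} x^m/(m·(1 − q^m)) + ∑_{m≥1} x^{−m}·q^m/(m·(1 − q^m)) ) = ∏_{k≥0} (1 − x·q^k) · ∏_{k≥1} (1 − x^{−1}·q^k)^{−1}, where both infinite products converge absolutely and no factor vanishes. -/
section Aux

open Complex

private lemma hasSum_log_shift {z : ℂ} (hz : ‖z‖ < 1) :
    HasSum (fun m : ℕ => z ^ (m + 1) / ((m : ℂ) + 1)) (-Complex.log (1 - z)) := by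
  have h := Complex.hasSum_taylorSeries_neg_log (z := z) (by simpa using hz)
  have h' := (hasSum_nat_add_iff' (f := fun n : ℕ => z ^ n / (n : ℂ)) 1).2 h
  simp only [Finset.range_one, Finset.sum_singleton, pow_zero, Nat.cast_zero, div_zero,
    sub_zero] at h'
  have hfun : (fun n : ℕ => z ^ (n + 1) / ((n + 1 : ℕ) : ℂ))
      = fun m : ℕ => z ^ (m + 1) / ((m : ℂ) + 1) := by
    funext m
    norm_cast
  rwa [hfun] at h' 

private lemma abs_term_lt_one {x q : ℂ} (hx : ‖x‖ < 1)
    (hq : ‖q‖ < 1) (k : ℕ) : ‖x * q ^ k‖ < 1 := by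
  have : ‖x * q ^ k‖ = ‖x‖ * ‖q‖ ^ k := by
    simp [norm_mul, norm_pow]
  rw [this]
  calc ‖x‖ * ‖q‖ ^ k ≤ ‖x‖ * 1 := by
        gcongr
        exact pow_le_one₀ (norm_nonneg q) hq.le
    _ = ‖x‖ := mul_one _
    _ < 1 := hx

private lemma one_sub_ne_zero {x q : ℂ} (hx : ‖x‖ < 1)
    (hq : ‖q‖ < 1) (k : ℕ) : 1 - x * q ^ k ≠ 0 := by
  intro h
  have h1 : x * q ^ k = 1 := by linear_combination -h
  have := abs_term_lt_one hx hq k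
  rw [h1] at this
  simp at this

private lemma summable_F {x q : ℂ} (hx : ‖x‖ < 1) (hq : ‖q‖ < 1) :
    Summable (fun p : ℕ × ℕ => (x * q ^ p.2) ^ (p.1 + 1) / ((p.1 : ℂ) + 1)) := by
  apply Summable.of_norm
  have hb : Summable (fun p : ℕ × ℕ => ‖x‖ ^ (p.1 + 1) * ‖q‖ ^ p.2) := by
    have hf : Summable (fun m : ℕ => ‖x‖ ^ (m + 1)) := by
      refine ((summable_geometric_of_lt_one (norm_nonneg x) hx).mul_left
        (‖x‖)).congr fun m => ?_
      rw [pow_succ']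
    exact hf.mul_of_nonneg (summable_geometric_of_lt_one (norm_nonneg q) hq)
      (fun m => pow_nonneg (norm_nonneg x) _)
      (fun k => pow_nonneg (norm_nonneg q) _)
  refine hb.of_nonneg_of_le (fun p => norm_nonneg _) fun p => ?_
  obtain ⟨m, k⟩ := p
  have h1 : (1 : ℝ) ≤ ‖(m : ℂ) + 1‖ := by
    have : ((m : ℂ) + 1) = ((m + 1 : ℕ) : ℂ) := by push_cast; ring
    rw [this, Complex.norm_natCast]
    exact_mod_cast Nat.succ_le_succ (Nat.zero_le m)
  calc ‖(x * q ^ k) ^ (m + 1) / ((m : ℂ) + 1)‖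
      = ‖(x * q ^ k) ^ (m + 1)‖ / ‖(m : ℂ) + 1‖ := by
        rw [norm_div]
    _ ≤ ‖(x * q ^ k) ^ (m + 1)‖ := div_le_self (norm_nonneg _) h1
    _ = ‖x‖ ^ (m + 1) * (‖q‖ ^ k) ^ (m + 1) := by
        rw [norm_pow, norm_mul, norm_pow, mul_pow]
    _ ≤ ‖x‖ ^ (m + 1) * ‖q‖ ^ k :=
        mul_le_mul_of_nonneg_left (pow_le_of_le_one (pow_nonneg (norm_nonneg q) _)
            (pow_le_one₀ (norm_nonneg q) hq.le) (Nat.succ_ne_zero m))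
          (pow_nonneg (norm_nonneg x) _)

private lemma key_lemma {x q : ℂ} (hx : ‖x‖ < 1) (hq : ‖q‖ < 1) :
    Summable (fun k : ℕ => Complex.log (1 - x * q ^ k)) ∧
    HasSum (fun m : ℕ => x ^ (m + 1) / (((m : ℂ) + 1) * (1 - q ^ (m + 1))))
      (-∑' k : ℕ, Complex.log (1 - x * q ^ k)) := by
  set F : ℕ × ℕ → ℂ := fun p => (x * q ^ p.2) ^ (p.1 + 1) / ((p.1 : ℂ) + 1) with hFdef
  have hF : Summable F := summable_F hx hq
  have hfib_m : ∀ m : ℕ, HasSum (fun k => F (m, k))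
      (x ^ (m + 1) / (((m : ℂ) + 1) * (1 - q ^ (m + 1)))) := by
    intro m
    have hqm : ‖q ^ (m + 1)‖ < 1 := by
      rw [norm_pow]
      exact pow_lt_one₀ (norm_nonneg q) hq (Nat.succ_ne_zero m)
    have hgeo := (hasSum_geometric_of_norm_lt_one hqm).mul_left
      (x ^ (m + 1) / ((m : ℂ) + 1))
    have hfun : (fun k : ℕ => x ^ (m + 1) / ((m : ℂ) + 1) * (q ^ (m + 1)) ^ k)
        = fun k => F (m, k) := by
      funext k
      simp only [hFdef]
      rw [mul_pow, ← pow_mul, ← pow_mul, Nat.mul_comm]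
      ring
    rw [hfun] at hgeo
    have hval : x ^ (m + 1) / ((m : ℂ) + 1) * (1 - q ^ (m + 1))⁻¹
        = x ^ (m + 1) / (((m : ℂ) + 1) * (1 - q ^ (m + 1))) := by
      rw [← div_eq_mul_inv, div_div]
    rwa [hval] at hgeo
  have hfib_k : ∀ k : ℕ, HasSum (fun m => F (m, k)) (-Complex.log (1 - x * q ^ k)) :=
    fun k => hasSum_log_shift (z := x * q ^ k) (abs_term_lt_one hx hq k)
  have h1 : HasSum (fun m : ℕ => x ^ (m + 1) / (((m : ℂ) + 1) * (1 - q ^ (m + 1))))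
      (∑' p, F p) := hF.hasSum.prod_fiberwise hfib_m
  have hF' : Summable (F ∘ Prod.swap) := hF.prod_symm
  have h2 : HasSum (fun k : ℕ => -Complex.log (1 - x * q ^ k)) (∑' p, F (Prod.swap p)) :=
    hF'.hasSum.prod_fiberwise fun k => hfib_k k
  have hswap : (∑' p : ℕ × ℕ, F (Prod.swap p)) = ∑' p, F p :=
    (Equiv.prodComm ℕ ℕ).tsum_eq F
  rw [hswap] at h2
  have h3 : HasSum (fun k : ℕ => Complex.log (1 - x * q ^ k)) (-(∑' p, F p)) := by
    simpa using h2.neg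
  refine ⟨h3.summable, ?_⟩
  rw [h3.tsum_eq, neg_neg]
  exact h1

private lemma prod_exp {x q : ℂ} (hx : ‖x‖ < 1) (hq : ‖q‖ < 1) :
    Multipliable (fun k : ℕ => 1 - x * q ^ k) ∧
    Complex.exp (∑' k : ℕ, Complex.log (1 - x * q ^ k)) = ∏' k : ℕ, (1 - x * q ^ k) := by
  have hfn : ∀ (u : Unit) (n : ℕ), (fun n (_ : Unit) => 1 - x * q ^ n) n u ≠ 0 :=
    fun _ n => one_sub_ne_zero hx hq n
  have hlog : ∀ u : Unit,
      Summable fun n => Complex.log ((fun n (_ : Unit) => 1 - x * q ^ n) n u) :=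
    fun _ => (key_lemma hx hq).1
  exact ⟨Complex.multipliable_of_summable_log (hlog ()),
    Complex.cexp_tsum_eq_tprod (hfn ()) (hlog ())⟩

private lemma summable_abs_term {x q : ℂ} (hx : ‖x‖ < 1)
    (hq : ‖q‖ < 1) :
    Summable (fun m : ℕ => ‖x ^ (m + 1) / (((m : ℂ) + 1) * (1 - q ^ (m + 1)))‖) := by
  have hq1 : 0 < 1 - ‖q‖ := by linarith
  have hb : Summable (fun m : ℕ => ‖x‖ ^ (m + 1) * (1 - ‖q‖)⁻¹) := by
    have hf : Summable (fun m : ℕ => ‖x‖ ^ (m + 1)) := by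
      refine ((summable_geometric_of_lt_one (norm_nonneg x) hx).mul_left
        (‖x‖)).congr fun m => ?_
      rw [pow_succ']
    exact hf.mul_right _
  refine hb.of_nonneg_of_le (fun m => norm_nonneg _) fun m => ?_
  rw [norm_div, norm_mul, norm_pow]
  have h1 : (1 : ℝ) ≤ ‖(m : ℂ) + 1‖ := by
    have : ((m : ℂ) + 1) = ((m + 1 : ℕ) : ℂ) := by push_cast; ring
    rw [this, Complex.norm_natCast]
    exact_mod_cast Nat.succ_le_succ (Nat.zero_le m)
  have h3 : ‖q ^ (m + 1)‖ ≤ ‖q‖ := by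
    rw [norm_pow]
    exact pow_le_of_le_one (norm_nonneg q) hq.le (Nat.succ_ne_zero m)
  have h4 : 1 - ‖q ^ (m + 1)‖ ≤ ‖1 - q ^ (m + 1)‖ := by
    have := norm_sub_norm_le (1 : ℂ) (q ^ (m + 1))
    simpa using this
  have h2 : 1 - ‖q‖ ≤ ‖1 - q ^ (m + 1)‖ := by linarith
  have hden : 1 - ‖q‖ ≤ ‖(m : ℂ) + 1‖ * ‖1 - q ^ (m + 1)‖ := by
    calc 1 - ‖q‖ = 1 * (1 - ‖q‖) := (one_mul _).symm
      _ ≤ ‖(m : ℂ) + 1‖ * ‖1 - q ^ (m + 1)‖ :=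
        mul_le_mul h1 h2 hq1.le (norm_nonneg _)
  calc ‖x‖ ^ (m + 1) / (‖(m : ℂ) + 1‖ * ‖1 - q ^ (m + 1)‖)
      ≤ ‖x‖ ^ (m + 1) / (1 - ‖q‖) :=
        div_le_div_of_nonneg_left (pow_nonneg (norm_nonneg x) _) hq1 hden
    _ = ‖x‖ ^ (m + 1) * (1 - ‖q‖)⁻¹ := div_eq_mul_inv _ _

end Aux


open Complex MeasureTheory Filter Topology

/-- The integral of `g` along the real axis with a semicircular detour of
radius `r` above the origin. -/
noncomputable def contourIntegral (r : ℝ) (g : ℂ → ℂ) : ℂ :=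
  (∫ x : ℝ in Set.Iic (-r), g (x : ℂ)) +
  (∫ θ : ℝ in (0:ℝ)..Real.pi,
      g ((r : ℂ) * Complex.exp (Complex.I * ((Real.pi : ℂ) - (θ : ℂ)))) *
        (-Complex.I * (r : ℂ) * Complex.exp (Complex.I * ((Real.pi : ℂ) - (θ : ℂ))))) +
  (∫ x : ℝ in Set.Ici r, g (x : ℂ))

/-- The polylogarithm `Li_k(x) = ∑_{n ≥ 1} x^n / n^k`, for `|x| < 1`. -/
noncomputable def Li (k : ℤ) (x : ℂ) : ℂ :=
  ∑' n : ℕ, x ^ (n + 1) / ((n : ℂ) + 1) ^ k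

/-- A closed subsector of the open right half-plane. -/
def IsClosedSubsector (S : Set ℂ) : Prop :=
  ∃ θ₁ θ₂ : ℝ, -(Real.pi / 2) < θ₁ ∧ θ₁ ≤ θ₂ ∧ θ₂ < Real.pi / 2 ∧
    S = {z : ℂ | ∃ ρ θ : ℝ, 0 < ρ ∧ θ₁ ≤ θ ∧ θ ≤ θ₂ ∧
          z = (ρ : ℂ) * Complex.exp (Complex.I * (θ : ℂ))}

/-- The series–product identity arising from the residue computation in the proof of
the reflection relation for the Barnes double sine function. -/
theorem series_product_identity_doubleSine
    (q x : ℂ) (hq : ‖q‖ < 1) (hqx : ‖q‖ < ‖x‖)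
    (hx : ‖x‖ < 1) :
    Summable (fun m : ℕ =>
      ‖x ^ (m + 1) / (((m : ℂ) + 1) * (1 - q ^ (m + 1)))‖) ∧
    Summable (fun m : ℕ =>
      ‖x⁻¹ ^ (m + 1) * q ^ (m + 1) / (((m : ℂ) + 1) * (1 - q ^ (m + 1)))‖) ∧
    Summable (fun k : ℕ => ‖x * q ^ k‖) ∧
    Summable (fun k : ℕ => ‖x⁻¹ * q ^ (k + 1)‖) ∧
    Multipliable (fun k : ℕ => 1 - x * q ^ k) ∧
    Multipliable (fun k : ℕ => 1 - x⁻¹ * q ^ (k + 1)) ∧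
    (∀ k : ℕ, 1 - x * q ^ k ≠ 0) ∧
    (∀ k : ℕ, 1 - x⁻¹ * q ^ (k + 1) ≠ 0) ∧
    Complex.exp (-(∑' m : ℕ, x ^ (m + 1) / (((m : ℂ) + 1) * (1 - q ^ (m + 1))))
        + ∑' m : ℕ, x⁻¹ ^ (m + 1) * q ^ (m + 1) / (((m : ℂ) + 1) * (1 - q ^ (m + 1)))) =
      (∏' k : ℕ, (1 - x * q ^ k)) * (∏' k : ℕ, (1 - x⁻¹ * q ^ (k + 1)))⁻¹ := by
  have hx0 : 0 < ‖x‖ := (norm_nonneg q).trans_lt hqx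
  have hx' : ‖x⁻¹ * q‖ < 1 := by
    rw [norm_mul, norm_inv, inv_mul_eq_div, div_lt_one hx0]
    exact hqx
  have hfun2 : (fun k : ℕ => 1 - x⁻¹ * q ^ (k + 1)) = fun k : ℕ => 1 - (x⁻¹ * q) * q ^ k := by
    funext k
    rw [pow_succ']
    ring
  have hterm2 : (fun m : ℕ => x⁻¹ ^ (m + 1) * q ^ (m + 1) / (((m : ℂ) + 1) * (1 - q ^ (m + 1))))
      = fun m : ℕ => (x⁻¹ * q) ^ (m + 1) / (((m : ℂ) + 1) * (1 - q ^ (m + 1))) := by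
    funext m
    rw [mul_pow]
  have hK1 := key_lemma hx hq
  have hK2 := key_lemma hx' hq
  have hP1 := prod_exp hx hq
  have hP2 := prod_exp hx' hq
  refine ⟨summable_abs_term hx hq, ?_, ?_, ?_, hP1.1, ?_, one_sub_ne_zero hx hq, ?_, ?_⟩
  · exact (summable_abs_term hx' hq).congr fun m =>
      congrArg norm (congrFun hterm2 m).symm
  · refine ((summable_geometric_of_lt_one (norm_nonneg q) hq).mul_left
      (‖x‖)).congr fun k => ?_
    rw [norm_mul, norm_pow]
  · refine ((summable_geometric_of_lt_one (norm_nonneg q) hq).mul_left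
      (‖x⁻¹ * q‖)).congr fun k => ?_
    have h5 : x⁻¹ * q ^ (k + 1) = (x⁻¹ * q) * q ^ k := by rw [pow_succ']; ring
    rw [h5]
    simp [norm_mul, norm_pow, mul_assoc]
  · rw [hfun2]
    exact hP2.1
  · intro k
    have := one_sub_ne_zero hx' hq k
    rwa [← congrFun hfun2 k] at this
  · rw [hterm2, hK1.2.tsum_eq, hK2.2.tsum_eq, hfun2, ← hP1.2, ← hP2.2, neg_neg,
      ← Complex.exp_neg, ← Complex.exp_add]
end

section
/- Let ω1, ω2, z ∈ ℂ with Re ω1 > 0, Re ω2 > 0 and 0 < Re z < Re(ω1 + ω2). Then: (a) the function u ↦ ∫_C e^{zs}/((e^{ω1 s} − 1)(e^{u s} − 1)·s) ds, defined for u in a neighbourhood of ω2 in the open right half-plane, is complex differentiable at u = ω2; (b) the function ζ ↦ −∫_C e^{(ζ+ω2)s}/((e^{ω2 s} − 1)²(e^{ω1 s} − 1)·s) ds, defined for ζ in a neighbourhood of z, is complex differentiable at ζ = z; and (c) the two derivatives are equal, both being given by −∫_C e^{(z+ω2)s}/((e^{ω1 s} − 1)(e^{ω2 s} − 1)²) ds.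 (This is the relation ∂/∂ω2 log F(z|ω1,ω2) = ∂/∂z log G(z|ω2,ω1) at the level of the integral representations.) -/
open Complex MeasureTheory Filter Topology

lemma exp_ne_one_of_re_ne_zero {w : ℂ} (h : w.re ≠ 0) : Complex.exp w ≠ 1 := by
  intro hw
  have h1 : ‖Complex.exp w‖ = 1 := by rw [hw]; simp
  rw [Complex.norm_exp] at h1
  exact h (by simpa using h1)

lemma exp_ne_one_of_small {w : ℂ} (h0 : w ≠ 0) (h : ‖w‖ < 2 * Real.pi) :
    Complex.exp w ≠ 1 := by
  intro hw
  obtain ⟨n, hn⟩ := Complex.exp_eq_one_iff.mp hw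
  rcases eq_or_ne n 0 with h' | h'
  · simp [h'] at hn; exact h0 hn
  · have h2 : (1:ℝ) ≤ |(n:ℝ)| := by exact_mod_cast Int.one_le_abs h'
    have e1 : ‖(2:ℂ) * (Real.pi:ℂ) * Complex.I‖ = 2 * Real.pi := by
      simp [abs_of_pos Real.pi_pos]
    have e2 : ‖(n:ℂ)‖ = |(n:ℝ)| := by
      exact Complex.norm_intCast n
    have habs : ‖w‖ = |(n:ℝ)| * (2 * Real.pi) := by
      rw [hn, norm_mul, e2, e1]
    nlinarith [Real.pi_pos]

lemma lb_pos {a r x : ℝ} {ω : ℂ} (ha : 0 < a) (haω : a ≤ ω.re) (hr : 0 < r) (hx : r ≤ x) :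
    (1 - Real.exp (-(a * r))) * Real.exp (a * x) ≤ ‖Complex.exp (ω * x) - 1‖ := by
  have hre : (ω * (x:ℂ)).re = ω.re * x := by simp [Complex.mul_re]
  have he : Real.exp (a*x) ≤ ‖Complex.exp (ω * x)‖ := by
    rw [Complex.norm_exp, hre]
    apply Real.exp_le_exp.mpr
    nlinarith
  have h1 : Real.exp (a * x) - 1 ≤ ‖Complex.exp (ω * x) - 1‖ := by
    have hn : ‖Complex.exp (ω * (x:ℂ))‖ - ‖(1:ℂ)‖ ≤ ‖Complex.exp (ω * (x:ℂ)) - 1‖ :=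
      norm_sub_norm_le _ _
    simp only [norm_one] at hn
    linarith
  have h3 : (1:ℝ) ≤ Real.exp (a*(x-r)) := Real.one_le_exp (by nlinarith)
  have h4 : Real.exp (-(a*r)) * Real.exp (a*x) = Real.exp (a*(x - r)) := by
    rw [← Real.exp_add]; ring_nf
  nlinarith [Real.exp_pos (a*x)]

lemma lb_neg {a r x : ℝ} {ω : ℂ} (ha : 0 < a) (haω : a ≤ ω.re) (hr : 0 < r) (hx : x ≤ -r) :
    1 - Real.exp (-(a * r)) ≤ ‖Complex.exp (ω * x) - 1‖ := by
  have hre : (ω * (x:ℂ)).re = ω.re * x := by simp [Complex.mul_re]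
  have he : ‖Complex.exp (ω * x)‖ ≤ Real.exp (-(a*r)) := by
    rw [Complex.norm_exp, hre]
    apply Real.exp_le_exp.mpr
    nlinarith
  have hn : ‖(1:ℂ)‖ - ‖Complex.exp (ω * (x:ℂ))‖ ≤ ‖(1:ℂ) - Complex.exp (ω * (x:ℂ))‖ :=
    norm_sub_norm_le _ _
  rw [norm_sub_rev] at hn
  simp only [norm_one] at hn
  linarith

lemma integrableOn_exp_mul_Iic' {c : ℝ} (hc : 0 < c) (d : ℝ) :
    IntegrableOn (fun x => Real.exp (c * x)) (Set.Iic d) := by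
  have h := exp_neg_integrableOn_Ioi (-d) hc
  have h2 : Integrable ((Set.Ioi (-d)).indicator (fun x => Real.exp (-c * x))) := by
    rwa [MeasureTheory.integrable_indicator_iff measurableSet_Ioi]
  have h3 := h2.comp_neg
  have h4 : (fun t => ((Set.Ioi (-d)).indicator (fun x => Real.exp (-c * x))) (-t))
      = (Set.Iio d).indicator (fun x => Real.exp (c * x)) := by
    funext x
    simp only [Set.indicator_apply, Set.mem_Ioi, Set.mem_Iio]
    rcases lt_or_ge x d with h5 | h5
    · rw [if_pos (by linarith), if_pos h5]; ring_nf
    · rw [if_neg (by simpa using h5), if_neg (by simpa using h5)]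
  rw [h4] at h3
  have h5 : IntegrableOn (fun x => Real.exp (c * x)) (Set.Iio d) := by
    rwa [MeasureTheory.integrable_indicator_iff measurableSet_Iio] at h3
  rwa [integrableOn_Iic_iff_integrableOn_Iio]

lemma integrableOn_exp_mul_Ici {c : ℝ} (hc : c < 0) (d : ℝ) :
    IntegrableOn (fun x => Real.exp (c * x)) (Set.Ici d) := by
  have h := exp_neg_integrableOn_Ioi d (show (0:ℝ) < -c by linarith)
  have : (fun x => Real.exp (-(-c) * x)) = (fun x => Real.exp (c * x)) := by
    funext x; ring_nf
  rw [this] at h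
  rwa [integrableOn_Ici_iff_integrableOn_Ioi]

lemma hasDerivAt_Fa (z ω₁ s u : ℂ) (hs : s ≠ 0) (hA : Complex.exp (ω₁ * s) ≠ 1)
    (hB : Complex.exp (u * s) ≠ 1) :
    HasDerivAt (fun u => Complex.exp (z * s) /
        ((Complex.exp (ω₁ * s) - 1) * (Complex.exp (u * s) - 1) * s))
      (-(Complex.exp ((z + u) * s) /
        ((Complex.exp (ω₁ * s) - 1) * (Complex.exp (u * s) - 1) ^ 2))) u := by
  have hA' : Complex.exp (ω₁ * s) - 1 ≠ 0 := sub_ne_zero.mpr hA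
  have hB' : Complex.exp (u * s) - 1 ≠ 0 := sub_ne_zero.mpr hB
  have hexp : HasDerivAt (fun u : ℂ => Complex.exp (u * s)) (Complex.exp (u * s) * s) u := by
    simpa using ((hasDerivAt_id u).mul_const s).cexp
  have hden : HasDerivAt (fun u : ℂ => (Complex.exp (ω₁ * s) - 1) * (Complex.exp (u * s) - 1) * s)
      ((Complex.exp (ω₁ * s) - 1) * (Complex.exp (u * s) * s) * s) u :=
    ((hexp.sub_const 1).const_mul (Complex.exp (ω₁ * s) - 1)).mul_const s
  have h := (hasDerivAt_const u (Complex.exp (z * s))).div hden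
    (mul_ne_zero (mul_ne_zero hA' hB') hs)
  refine h.congr_deriv ?_
  rw [add_mul, Complex.exp_add]
  field_simp
  ring

lemma hasDerivAt_Fb (ω₂ E s w : ℂ) (hs : s ≠ 0) (hE : E ≠ 0) :
    HasDerivAt (fun w => -(Complex.exp ((w + ω₂) * s) / (E * s)))
      (-(Complex.exp ((w + ω₂) * s) / E)) w := by
  have h : HasDerivAt (fun w : ℂ => Complex.exp ((w + ω₂) * s))
      (Complex.exp ((w + ω₂) * s) * s) w := by
    simpa using (((hasDerivAt_id w).add_const ω₂).mul_const s).cexp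
  have h2 := (h.div_const (E * s)).neg
  refine h2.congr_deriv ?_
  field_simp

lemma contourIntegral_neg (r : ℝ) (g : ℂ → ℂ) :
    contourIntegral r (fun s => -(g s)) = -contourIntegral r g := by
  unfold contourIntegral
  rw [integral_neg, integral_neg]
  have : ∀ θ : ℝ, -g ((r : ℂ) * Complex.exp (Complex.I * ((Real.pi : ℂ) - (θ : ℂ)))) *
        (-Complex.I * (r : ℂ) * Complex.exp (Complex.I * ((Real.pi : ℂ) - (θ : ℂ)))) =
      -(g ((r : ℂ) * Complex.exp (Complex.I * ((Real.pi : ℂ) - (θ : ℂ)))) *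
        (-Complex.I * (r : ℂ) * Complex.exp (Complex.I * ((Real.pi : ℂ) - (θ : ℂ))))) := by
    intro θ; ring
  simp_rw [this]
  rw [intervalIntegral.integral_neg]
  ring

lemma exists_arc_bound (r : ℝ) (hr0 : 0 < r) (K : Set ℂ) (hK : IsCompact K)
    (hKne : K.Nonempty) (hK0 : ∀ u ∈ K, u ≠ 0)
    (hKsmall : ∀ u ∈ K, ‖u‖ * r < 2 * Real.pi) :
    ∃ c > 0, ∀ u ∈ K, ∀ θ ∈ Set.Icc (0:ℝ) Real.pi,
      c ≤ ‖Complex.exp (u * ((r : ℂ) *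
        Complex.exp (Complex.I * ((Real.pi : ℂ) - (θ : ℂ))))) - 1‖ := by
  set f : ℂ × ℝ → ℝ := fun p => ‖Complex.exp (p.1 * ((r : ℂ) *
        Complex.exp (Complex.I * ((Real.pi : ℂ) - (p.2 : ℂ))))) - 1‖ with hf
  have hcont : Continuous f := by
    apply continuous_norm.comp
    apply Continuous.sub _ continuous_const
    apply Complex.continuous_exp.comp
    apply Continuous.mul continuous_fst
    apply Continuous.mul continuous_const
    apply Complex.continuous_exp.comp
    apply Continuous.mul continuous_const
    exact Continuous.sub continuous_const (Complex.continuous_ofReal.comp continuous_snd)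
  have hKc : IsCompact (K ×ˢ Set.Icc (0:ℝ) Real.pi) := hK.prod isCompact_Icc
  have hne : (K ×ˢ Set.Icc (0:ℝ) Real.pi).Nonempty :=
    hKne.prod ⟨0, by constructor <;> simp [Real.pi_pos.le]⟩
  obtain ⟨p₀, hp₀, hmin⟩ := hKc.exists_isMinOn hne hcont.continuousOn
  refine ⟨f p₀, ?_, fun u hu θ hθ => isMinOn_iff.mp hmin (u, θ) ⟨hu, hθ⟩⟩
  have hs : ((r : ℂ) * Complex.exp (Complex.I * ((Real.pi : ℂ) - (p₀.2 : ℂ)))) ≠ 0 := by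
    apply mul_ne_zero
    · exact_mod_cast hr0.ne'
    · exact Complex.exp_ne_zero _
  have habs : ‖(r : ℂ) * Complex.exp (Complex.I * ((Real.pi : ℂ) - (p₀.2 : ℂ)))‖ = r := by
    rw [norm_mul, Complex.norm_exp]
    have : (Complex.I * ((Real.pi : ℂ) - (p₀.2 : ℂ))).re = 0 := by
      simp [Complex.mul_re]
    rw [this]
    simp [abs_of_pos hr0]
  have hu0 : p₀.1 ≠ 0 := hK0 _ (Set.mem_prod.mp hp₀).1
  have hne1 : Complex.exp (p₀.1 * ((r : ℂ) *
      Complex.exp (Complex.I * ((Real.pi : ℂ) - (p₀.2 : ℂ))))) ≠ 1 := by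
    apply exp_ne_one_of_small (mul_ne_zero hu0 hs)
    rw [norm_mul, habs]
    exact hKsmall _ (Set.mem_prod.mp hp₀).1
  have : f p₀ ≠ 0 := by
    simp only [hf, ne_eq, norm_eq_zero, sub_eq_zero]
    exact hne1
  exact lt_of_le_of_ne (norm_nonneg _) (Ne.symm this)

lemma hasDerivAt_setIntegral_param {S : Set ℝ} (hS : MeasurableSet S) {F F' : ℂ → ℝ → ℂ}
    {u₀ : ℂ} {bound : ℝ → ℝ} {ε : ℝ} (hε : 0 < ε)
    (hmeas : ∀ u, AEStronglyMeasurable (F u) (volume.restrict S))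
    (hint : IntegrableOn (F u₀) S)
    (hmeas' : AEStronglyMeasurable (F' u₀) (volume.restrict S))
    (hbound : ∀ x ∈ S, ∀ u ∈ Metric.ball u₀ ε, ‖F' u x‖ ≤ bound x)
    (hbi : IntegrableOn bound S)
    (hdiff : ∀ x ∈ S, ∀ u ∈ Metric.ball u₀ ε, HasDerivAt (fun u => F u x) (F' u x) u) :
    HasDerivAt (fun u => ∫ x in S, F u x) (∫ x in S, F' u₀ x) u₀ :=
  (hasDerivAt_integral_of_dominated_loc_of_deriv_le (Metric.ball_mem_nhds _ hε) (Eventually.of_forall hmeas) hint hmeas'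
    ((ae_restrict_iff' hS).mpr (Eventually.of_forall hbound)) hbi
    ((ae_restrict_iff' hS).mpr (Eventually.of_forall hdiff))).2

lemma integrableOn_of_bound {S : Set ℝ} (hS : MeasurableSet S) {f : ℝ → ℂ}
    (hm : AEStronglyMeasurable f (volume.restrict S)) {bound : ℝ → ℝ}
    (hbi : IntegrableOn bound S) (hb : ∀ x ∈ S, ‖f x‖ ≤ bound x) : IntegrableOn f S :=
  hbi.mono' hm ((ae_restrict_iff' hS).mpr (Eventually.of_forall hb))

section PartA
variable (ω₁ ω₂ z : ℂ) (r : ℝ)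

set_option maxHeartbeats 2000000 in
lemma partA (h1 : 0 < ω₁.re) (h2 : 0 < ω₂.re)
    (hz0 : 0 < z.re) (hz1 : z.re < ω₁.re + ω₂.re)
    (hr0 : 0 < r) (hra : ‖ω₁‖ * r < 2 * Real.pi)
    (hrb : ‖ω₂‖ * r < 2 * Real.pi) :
    HasDerivAt (fun u => contourIntegral r (fun s =>
        Complex.exp (z * s) /
          ((Complex.exp (ω₁ * s) - 1) * (Complex.exp (u * s) - 1) * s)))
      (contourIntegral r (fun s =>
        -(Complex.exp ((z + ω₂) * s) /
          ((Complex.exp (ω₁ * s) - 1) * (Complex.exp (ω₂ * s) - 1) ^ 2)))) ω₂ := by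
  -- the radius ε
  set ε : ℝ := min (min (ω₂.re/2) (z.re/2))
      (min ((2*Real.pi - ‖ω₂‖ * r)/(2*r)) ((ω₁.re + ω₂.re - z.re)/4)) with hεdef
  have hε : 0 < ε := by
    apply lt_min (lt_min (by linarith) (by linarith))
    apply lt_min
    · apply div_pos (by linarith) (by linarith)
    · linarith
  have hε1 : ε ≤ ω₂.re/2 := le_trans (min_le_left _ _) (min_le_left _ _)
  have hε2 : ε ≤ z.re/2 := le_trans (min_le_left _ _) (min_le_right _ _)
  have hε3 : ε ≤ (2*Real.pi - ‖ω₂‖ * r)/(2*r) :=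
    le_trans (min_le_right _ _) (min_le_left _ _)
  have hε4 : ε ≤ (ω₁.re + ω₂.re - z.re)/4 :=
    le_trans (min_le_right _ _) (min_le_right _ _)
  -- facts about u in the closed ball
  have hur : ∀ u ∈ Metric.closedBall ω₂ ε, ω₂.re - ε ≤ u.re ∧ u.re ≤ ω₂.re + ε := by
    intro u hu
    rw [Metric.mem_closedBall, Complex.dist_eq] at hu
    have := Complex.abs_re_le_norm (u - ω₂)
    rw [Complex.sub_re] at this
    have := abs_le.mp (le_trans this hu)
    constructor <;> linarith [this.1, this.2]
  have hu0 : ∀ u ∈ Metric.closedBall ω₂ ε, u ≠ 0 := by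
    intro u hu h0
    have := (hur u hu).1
    rw [h0] at this
    simp only [Complex.zero_re] at this
    linarith
  have husmall : ∀ u ∈ Metric.closedBall ω₂ ε, ‖u‖ * r < 2 * Real.pi := by
    intro u hu
    rw [Metric.mem_closedBall, Complex.dist_eq] at hu
    have h5 : ‖u‖ ≤ ‖ω₂‖ + ε := by
      have hh := norm_sub_norm_le u ω₂
      linarith
    have h6 : ε * r ≤ (2*Real.pi - ‖ω₂‖ * r)/2 := by
      have hh := mul_le_mul_of_nonneg_right hε3 hr0.le
      calc ε * r ≤ ((2*Real.pi - ‖ω₂‖ * r)/(2*r)) * r := hh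
        _ = (2*Real.pi - ‖ω₂‖ * r)/2 := by field_simp
    have : ‖u‖ * r ≤ ‖ω₂‖ * r + ε * r := by nlinarith [norm_nonneg u]
    linarith
  -- arc lower bounds
  obtain ⟨cB, hcB0, hcB⟩ := exists_arc_bound r hr0 (Metric.closedBall ω₂ ε)
    (isCompact_closedBall _ _) ⟨ω₂, Metric.mem_closedBall_self hε.le⟩ hu0 husmall
  obtain ⟨cA, hcA0, hcA⟩ := exists_arc_bound r hr0 {ω₁} isCompact_singleton
    ⟨ω₁, rfl⟩ (by rintro u rfl; intro h0; rw [h0] at h1; simp at h1)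
    (by rintro u rfl; exact hra)
  -- basic constants
  have hball := (Metric.ball_subset_closedBall : Metric.ball ω₂ ε ⊆ Metric.closedBall ω₂ ε)
  have ha2 : 0 < ω₂.re - ε := by linarith
  set c1 : ℝ := 1 - Real.exp (-(ω₁.re * r)) with hc1def
  set c2 : ℝ := 1 - Real.exp (-((ω₂.re - ε) * r)) with hc2def
  have hc1 : 0 < c1 := by
    have : Real.exp (-(ω₁.re * r)) < Real.exp 0 := Real.exp_lt_exp.mpr (by nlinarith)
    simp only [Real.exp_zero] at this
    simp only [hc1def]; linarith
  have hc2 : 0 < c2 := by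
    have : Real.exp (-((ω₂.re - ε) * r)) < Real.exp 0 := Real.exp_lt_exp.mpr (by nlinarith)
    simp only [Real.exp_zero] at this
    simp only [hc2def]; linarith
  -- measurability
  have hmul : ∀ c : ℂ, Measurable fun x : ℝ => Complex.exp (c * (x:ℂ)) :=
    fun c => Complex.measurable_exp.comp (Complex.measurable_ofReal.const_mul c)
  have hre : ∀ (w : ℂ) (x : ℝ), (w * (x:ℂ)).re = w.re * x := fun w x => by
    simp [Complex.mul_re]
  have hnormF : ∀ (u : ℂ) (x : ℝ),
      ‖Complex.exp (z*(x:ℂ)) / ((Complex.exp (ω₁*(x:ℂ))-1) * (Complex.exp (u*(x:ℂ))-1) * (x:ℂ))‖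
        = Real.exp (z.re*x) / (‖Complex.exp (ω₁*(x:ℂ))-1‖
            * ‖Complex.exp (u*(x:ℂ))-1‖ * |x|) := by
    intro u x
    rw [norm_div, norm_mul, norm_mul, Complex.norm_exp, hre,
      Complex.norm_real, Real.norm_eq_abs]
  have hnormF' : ∀ (u : ℂ) (x : ℝ),
      ‖-(Complex.exp ((z+u)*(x:ℂ)) / ((Complex.exp (ω₁*(x:ℂ))-1)
          * (Complex.exp (u*(x:ℂ))-1)^2))‖
        = Real.exp ((z.re+u.re)*x) / (‖Complex.exp (ω₁*(x:ℂ))-1‖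
            * ‖Complex.exp (u*(x:ℂ))-1‖^2) := by
    intro u x
    rw [norm_neg, norm_div, norm_mul, norm_pow, Complex.norm_exp, hre,
      Complex.add_re]
  have hA_tail : ∀ x : ℝ, x ≠ 0 → Complex.exp (ω₁ * (x:ℂ)) ≠ 1 := fun x hx =>
    exp_ne_one_of_re_ne_zero (by rw [hre]; exact mul_ne_zero h1.ne' hx)
  have hB_tail : ∀ u ∈ Metric.closedBall ω₂ ε, ∀ x : ℝ, x ≠ 0 →
      Complex.exp (u * (x:ℂ)) ≠ 1 := by
    intro u hu x hx
    have hure : 0 < u.re := by have := (hur u hu).1; linarith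
    exact exp_ne_one_of_re_ne_zero (by rw [hre]; exact mul_ne_zero hure.ne' hx)
  have hmF : ∀ u : ℂ, Measurable fun x : ℝ => Complex.exp (z * (x:ℂ)) /
      ((Complex.exp (ω₁*(x:ℂ)) - 1) * (Complex.exp (u*(x:ℂ)) - 1) * (x:ℂ)) := fun u =>
    (hmul z).div ((((hmul ω₁).sub measurable_const).mul
      ((hmul u).sub measurable_const)).mul Complex.measurable_ofReal)
  have hmF' : ∀ u : ℂ, Measurable fun x : ℝ => -(Complex.exp ((z+u) * (x:ℂ)) /
      ((Complex.exp (ω₁*(x:ℂ)) - 1) * (Complex.exp (u*(x:ℂ)) - 1)^2)) := fun u =>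
    ((hmul (z+u)).div (((hmul ω₁).sub measurable_const).mul
      (((hmul u).sub measurable_const).pow_const 2))).neg
  -- the left tail
  have hd1 : HasDerivAt (fun u : ℂ => ∫ x : ℝ in Set.Iic (-r),
        Complex.exp (z * (x:ℂ)) /
          ((Complex.exp (ω₁ * (x:ℂ)) - 1) * (Complex.exp (u * (x:ℂ)) - 1) * (x:ℂ)))
      (∫ x : ℝ in Set.Iic (-r),
        -(Complex.exp ((z + ω₂) * (x:ℂ)) /
          ((Complex.exp (ω₁ * (x:ℂ)) - 1) * (Complex.exp (ω₂ * (x:ℂ)) - 1) ^ 2))) ω₂ := by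
    apply hasDerivAt_setIntegral_param
      (F := fun (u : ℂ) (x : ℝ) => Complex.exp (z * (x:ℂ)) /
          ((Complex.exp (ω₁ * (x:ℂ)) - 1) * (Complex.exp (u * (x:ℂ)) - 1) * (x:ℂ)))
      (F' := fun (u : ℂ) (x : ℝ) => -(Complex.exp ((z + u) * (x:ℂ)) /
          ((Complex.exp (ω₁ * (x:ℂ)) - 1) * (Complex.exp (u * (x:ℂ)) - 1) ^ 2)))
      measurableSet_Iic hε
      (fun u => (hmF u).aestronglyMeasurable)
      ?hint ((hmF' ω₂).aestronglyMeasurable) ?hbound ?hbi ?hdiff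
    case hint =>
      apply integrableOn_of_bound measurableSet_Iic (hmF ω₂).aestronglyMeasurable
        ((integrableOn_exp_mul_Iic' hz0 (-r)).div_const (c1 * c2 * r))
      intro x hx
      have hx' : x ≤ -r := hx
      have hxne : x ≠ 0 := by intro h; rw [h] at hx'; linarith
      rw [hnormF]
      apply div_le_div₀ (Real.exp_pos _).le le_rfl (by positivity)
      have e1 : c1 ≤ ‖Complex.exp (ω₁*(x:ℂ))-1‖ := lb_neg h1 le_rfl hr0 hx'
      have e2 : c2 ≤ ‖Complex.exp (ω₂*(x:ℂ))-1‖ :=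
        lb_neg ha2 (by linarith) hr0 hx'
      have e3 : r ≤ |x| := by rw [abs_of_nonpos (by linarith)]; linarith
      calc c1 * c2 * r ≤ (‖Complex.exp (ω₁*(x:ℂ))-1‖
            * ‖Complex.exp (ω₂*(x:ℂ))-1‖) * |x| := by
            apply mul_le_mul (mul_le_mul e1 e2 hc2.le (norm_nonneg _)) e3 hr0.le
              (by positivity)
        _ = _ := by ring
    case hbound =>
      intro x hx u hu
      have hx' : x ≤ -r := hx
      show ‖-(Complex.exp ((z+u)*(x:ℂ)) / ((Complex.exp (ω₁*(x:ℂ))-1)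
          * (Complex.exp (u*(x:ℂ))-1)^2))‖
        ≤ Real.exp ((z.re + (ω₂.re - ε))*x) / (c1 * c2^2)
      rw [hnormF']
      have hu' := hur u (hball hu)
      apply div_le_div₀ (Real.exp_pos _).le
        (Real.exp_le_exp.mpr (by nlinarith [hu'.1])) (by positivity)
      have e1 : c1 ≤ ‖Complex.exp (ω₁*(x:ℂ))-1‖ := lb_neg h1 le_rfl hr0 hx'
      have e2 : c2 ≤ ‖Complex.exp (u*(x:ℂ))-1‖ :=
        lb_neg ha2 (by linarith [hu'.1]) hr0 hx'
      exact mul_le_mul e1 (pow_le_pow_left₀ hc2.le e2 2) (by positivity) (norm_nonneg _)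
    case hbi =>
      exact (integrableOn_exp_mul_Iic' (by linarith) (-r)).div_const (c1 * c2^2)
    case hdiff =>
      intro x hx u hu
      have hx' : x ≤ -r := hx
      have hxne : x ≠ 0 := by intro h; rw [h] at hx'; linarith
      exact hasDerivAt_Fa z ω₁ (x:ℂ) u (Complex.ofReal_ne_zero.mpr hxne)
        (hA_tail x hxne) (hB_tail u (hball hu) x hxne)
  -- the right tail
  have hd3 : HasDerivAt (fun u : ℂ => ∫ x : ℝ in Set.Ici r,
        Complex.exp (z * (x:ℂ)) /
          ((Complex.exp (ω₁ * (x:ℂ)) - 1) * (Complex.exp (u * (x:ℂ)) - 1) * (x:ℂ)))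
      (∫ x : ℝ in Set.Ici r,
        -(Complex.exp ((z + ω₂) * (x:ℂ)) /
          ((Complex.exp (ω₁ * (x:ℂ)) - 1) * (Complex.exp (ω₂ * (x:ℂ)) - 1) ^ 2))) ω₂ := by
    apply hasDerivAt_setIntegral_param
      (F := fun (u : ℂ) (x : ℝ) => Complex.exp (z * (x:ℂ)) /
          ((Complex.exp (ω₁ * (x:ℂ)) - 1) * (Complex.exp (u * (x:ℂ)) - 1) * (x:ℂ)))
      (F' := fun (u : ℂ) (x : ℝ) => -(Complex.exp ((z + u) * (x:ℂ)) /
          ((Complex.exp (ω₁ * (x:ℂ)) - 1) * (Complex.exp (u * (x:ℂ)) - 1) ^ 2)))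
      (bound := fun x : ℝ => Real.exp ((z.re + (ω₂.re + ε) - ω₁.re - 2*(ω₂.re - ε)) * x)
          / (c1 * c2^2))
      measurableSet_Ici hε
      (fun u => (hmF u).aestronglyMeasurable)
      ?hint ((hmF' ω₂).aestronglyMeasurable) ?hbound ?hbi ?hdiff
    case hint =>
      apply integrableOn_of_bound measurableSet_Ici (hmF ω₂).aestronglyMeasurable
        ((integrableOn_exp_mul_Ici
          (show z.re - ω₁.re - (ω₂.re - ε) < 0 by linarith) r).div_const (c1 * c2 * r))
      intro x hx
      have hx' : r ≤ x := hx
      rw [hnormF]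
      have e1 := lb_pos h1 le_rfl hr0 hx'
      have e2 := lb_pos ha2 (by linarith : ω₂.re - ε ≤ ω₂.re) hr0 hx'
      have e3 : r ≤ |x| := by rw [abs_of_pos (by linarith)]; linarith
      calc Real.exp (z.re * x) / (‖Complex.exp (ω₁*(x:ℂ))-1‖
            * ‖Complex.exp (ω₂*(x:ℂ))-1‖ * |x|)
          ≤ Real.exp (z.re * x) / ((c1 * Real.exp (ω₁.re * x))
            * (c2 * Real.exp ((ω₂.re - ε) * x)) * r) := by
            apply div_le_div₀ (Real.exp_pos _).le le_rfl (by positivity)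
            apply mul_le_mul (mul_le_mul e1 e2 (by positivity) (norm_nonneg _)) e3
              hr0.le (by positivity)
        _ = Real.exp ((z.re - ω₁.re - (ω₂.re - ε)) * x) / (c1 * c2 * r) := by
            rw [show z.re * x = (z.re - ω₁.re - (ω₂.re - ε)) * x
                + (ω₁.re * x + (ω₂.re - ε) * x) by ring, Real.exp_add, Real.exp_add]
            field_simp
    case hbound =>
      intro x hx u hu
      have hx' : r ≤ x := hx
      have hu' := hur u (hball hu)
      show ‖-(Complex.exp ((z+u)*(x:ℂ)) / ((Complex.exp (ω₁*(x:ℂ))-1)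
          * (Complex.exp (u*(x:ℂ))-1)^2))‖
        ≤ Real.exp ((z.re + (ω₂.re + ε) - ω₁.re - 2*(ω₂.re - ε)) * x) / (c1 * c2^2)
      rw [hnormF']
      have e1 := lb_pos h1 le_rfl hr0 hx'
      have e2 := lb_pos ha2 (by linarith [hu'.1] : ω₂.re - ε ≤ u.re) hr0 hx'
      calc Real.exp ((z.re + u.re) * x) / (‖Complex.exp (ω₁*(x:ℂ))-1‖
            * ‖Complex.exp (u*(x:ℂ))-1‖^2)
          ≤ Real.exp ((z.re + (ω₂.re + ε)) * x) / ((c1 * Real.exp (ω₁.re * x))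
            * (c2 * Real.exp ((ω₂.re - ε) * x))^2) := by
            apply div_le_div₀ (Real.exp_pos _).le
              (Real.exp_le_exp.mpr (by nlinarith [hu'.2])) (by positivity)
            exact mul_le_mul e1 (pow_le_pow_left₀ (by positivity) e2 2) (by positivity)
              (norm_nonneg _)
        _ = Real.exp ((z.re + (ω₂.re + ε) - ω₁.re - 2*(ω₂.re - ε)) * x) / (c1 * c2^2) := by
            rw [show (z.re + (ω₂.re + ε)) * x
                = (z.re + (ω₂.re + ε) - ω₁.re - 2*(ω₂.re - ε)) * x
                  + (ω₁.re * x + ((ω₂.re - ε) * x + (ω₂.re - ε) * x)) by ring,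
              Real.exp_add, Real.exp_add, Real.exp_add]
            rw [pow_two, pow_two]
            field_simp
    case hbi =>
      exact (integrableOn_exp_mul_Ici (by linarith) r).div_const (c1 * c2^2)
    case hdiff =>
      intro x hx u hu
      have hx' : r ≤ x := hx
      have hxne : x ≠ 0 := by intro h; rw [h] at hx'; linarith
      exact hasDerivAt_Fa z ω₁ (x:ℂ) u (Complex.ofReal_ne_zero.mpr hxne)
        (hA_tail x hxne) (hB_tail u (hball hu) x hxne)

  -- arc facts
  have huabs : ∀ u ∈ Metric.closedBall ω₂ ε, ‖u‖ ≤ ‖ω₂‖ + ε := by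
    intro u hu
    rw [Metric.mem_closedBall, Complex.dist_eq] at hu
    have hh := norm_sub_norm_le u ω₂
    linarith
  have hiarg : ∀ θ : ℝ, (Complex.I * ((Real.pi:ℂ) - (θ:ℂ))).re = 0 := by
    intro θ; simp [Complex.mul_re]
  have hexpI : ∀ θ : ℝ, ‖Complex.exp (Complex.I * ((Real.pi:ℂ) - (θ:ℂ)))‖ = 1 := by
    intro θ; rw [Complex.norm_exp, hiarg]; exact Real.exp_zero
  have hsabs : ∀ θ : ℝ, ‖(r:ℂ) * Complex.exp (Complex.I * ((Real.pi:ℂ) - (θ:ℂ)))‖ = r := by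
    intro θ; rw [norm_mul, Complex.norm_real, Real.norm_eq_abs, hexpI, abs_of_pos hr0, mul_one]
  have hsne : ∀ θ : ℝ, ((r:ℂ) * Complex.exp (Complex.I * ((Real.pi:ℂ) - (θ:ℂ)))) ≠ 0 := by
    intro θ
    exact mul_ne_zero (by exact_mod_cast hr0.ne') (Complex.exp_ne_zero _)
  have hMabs : ∀ θ : ℝ, ‖-Complex.I * (r:ℂ)
      * Complex.exp (Complex.I * ((Real.pi:ℂ) - (θ:ℂ)))‖ = r := by
    intro θ
    rw [norm_mul, norm_mul, hexpI, mul_one]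
    simp [abs_of_pos hr0]
  have hAarc : ∀ θ ∈ Set.Icc (0:ℝ) Real.pi,
      Complex.exp (ω₁ * ((r:ℂ) * Complex.exp (Complex.I * ((Real.pi:ℂ) - (θ:ℂ))))) ≠ 1 := by
    intro θ hθ heq
    have := hcA ω₁ rfl θ hθ
    rw [heq] at this
    simp at this
    linarith
  have hBarc : ∀ u ∈ Metric.closedBall ω₂ ε, ∀ θ ∈ Set.Icc (0:ℝ) Real.pi,
      Complex.exp (u * ((r:ℂ) * Complex.exp (Complex.I * ((Real.pi:ℂ) - (θ:ℂ))))) ≠ 1 := by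
    intro u hu θ hθ heq
    have := hcB u hu θ hθ
    rw [heq] at this
    simp at this
    linarith
  have hScont : Continuous (fun θ : ℝ => (r:ℂ) * Complex.exp (Complex.I * ((Real.pi:ℂ) - (θ:ℂ)))) :=
    continuous_const.mul (Complex.continuous_exp.comp
      (continuous_const.mul (continuous_const.sub Complex.continuous_ofReal)))
  have hexpc : ∀ c : ℂ, Continuous (fun θ : ℝ =>
      Complex.exp (c * ((r:ℂ) * Complex.exp (Complex.I * ((Real.pi:ℂ) - (θ:ℂ)))))) := fun c =>
    Complex.continuous_exp.comp (continuous_const.mul hScont)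
  have hMcont : Continuous (fun θ : ℝ => -Complex.I * (r:ℂ)
      * Complex.exp (Complex.I * ((Real.pi:ℂ) - (θ:ℂ)))) :=
    continuous_const.mul (Complex.continuous_exp.comp
      (continuous_const.mul (continuous_const.sub Complex.continuous_ofReal)))
  have hIoc : Set.uIoc (0:ℝ) Real.pi = Set.Ioc (0:ℝ) Real.pi := Set.uIoc_of_le Real.pi_pos.le
  -- the arc integral
  have hd2 : HasDerivAt (fun u : ℂ => ∫ θ : ℝ in (0:ℝ)..Real.pi,
        Complex.exp (z * ((r:ℂ) * Complex.exp (Complex.I * ((Real.pi:ℂ) - (θ:ℂ))))) /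
          ((Complex.exp (ω₁ * ((r:ℂ) * Complex.exp (Complex.I * ((Real.pi:ℂ) - (θ:ℂ))))) - 1)
            * (Complex.exp (u * ((r:ℂ) * Complex.exp (Complex.I * ((Real.pi:ℂ) - (θ:ℂ))))) - 1)
            * ((r:ℂ) * Complex.exp (Complex.I * ((Real.pi:ℂ) - (θ:ℂ)))))
          * (-Complex.I * (r:ℂ) * Complex.exp (Complex.I * ((Real.pi:ℂ) - (θ:ℂ)))))
      (∫ θ : ℝ in (0:ℝ)..Real.pi,
        -(Complex.exp ((z + ω₂) * ((r:ℂ) * Complex.exp (Complex.I * ((Real.pi:ℂ) - (θ:ℂ))))) /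
          ((Complex.exp (ω₁ * ((r:ℂ) * Complex.exp (Complex.I * ((Real.pi:ℂ) - (θ:ℂ))))) - 1)
            * (Complex.exp (ω₂ * ((r:ℂ) * Complex.exp (Complex.I * ((Real.pi:ℂ) - (θ:ℂ))))) - 1) ^ 2))
          * (-Complex.I * (r:ℂ) * Complex.exp (Complex.I * ((Real.pi:ℂ) - (θ:ℂ))))) ω₂ := by
    apply (intervalIntegral.hasDerivAt_integral_of_dominated_loc_of_deriv_le
      (F := fun (u : ℂ) (θ : ℝ) =>
        Complex.exp (z * ((r:ℂ) * Complex.exp (Complex.I * ((Real.pi:ℂ) - (θ:ℂ))))) /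
          ((Complex.exp (ω₁ * ((r:ℂ) * Complex.exp (Complex.I * ((Real.pi:ℂ) - (θ:ℂ))))) - 1)
            * (Complex.exp (u * ((r:ℂ) * Complex.exp (Complex.I * ((Real.pi:ℂ) - (θ:ℂ))))) - 1)
            * ((r:ℂ) * Complex.exp (Complex.I * ((Real.pi:ℂ) - (θ:ℂ)))))
          * (-Complex.I * (r:ℂ) * Complex.exp (Complex.I * ((Real.pi:ℂ) - (θ:ℂ)))))
      (F' := fun (u : ℂ) (θ : ℝ) =>
        -(Complex.exp ((z + u) * ((r:ℂ) * Complex.exp (Complex.I * ((Real.pi:ℂ) - (θ:ℂ))))) /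
          ((Complex.exp (ω₁ * ((r:ℂ) * Complex.exp (Complex.I * ((Real.pi:ℂ) - (θ:ℂ))))) - 1)
            * (Complex.exp (u * ((r:ℂ) * Complex.exp (Complex.I * ((Real.pi:ℂ) - (θ:ℂ))))) - 1) ^ 2))
          * (-Complex.I * (r:ℂ) * Complex.exp (Complex.I * ((Real.pi:ℂ) - (θ:ℂ)))))
      (bound := fun _ : ℝ =>
        Real.exp ((‖z‖ + ‖ω₂‖ + ε) * r) * r / (cA * cB^2))
      (Metric.ball_mem_nhds _ hε) ?meas ?int ?meas' ?bound ?bi ?diff).2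
    case meas =>
      apply Eventually.of_forall
      intro u
      exact (((hexpc z).measurable.div
        ((((hexpc ω₁).measurable.sub measurable_const).mul
          ((hexpc u).measurable.sub measurable_const)).mul hScont.measurable)).mul
        hMcont.measurable).aestronglyMeasurable
    case int =>
      apply ContinuousOn.intervalIntegrable
      rw [Set.uIcc_of_le Real.pi_pos.le]
      apply ContinuousOn.mul _ hMcont.continuousOn
      apply ContinuousOn.div (hexpc z).continuousOn
        ((((hexpc ω₁).continuousOn.sub continuousOn_const).mul
          ((hexpc ω₂).continuousOn.sub continuousOn_const)).mul hScont.continuousOn)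
      intro θ hθ
      exact mul_ne_zero (mul_ne_zero (sub_ne_zero.mpr (hAarc θ hθ))
        (sub_ne_zero.mpr (hBarc ω₂ (Metric.mem_closedBall_self hε.le) θ hθ))) (hsne θ)
    case meas' =>
      exact (((hexpc (z + ω₂)).measurable.div
        ((((hexpc ω₁).measurable.sub measurable_const).mul
          (((hexpc ω₂).measurable.sub measurable_const).pow_const 2)))).neg.mul
        hMcont.measurable).aestronglyMeasurable
    case bound =>
      apply Eventually.of_forall
      intro θ hθ u hu
      have hθ' : θ ∈ Set.Icc (0:ℝ) Real.pi := Set.Ioc_subset_Icc_self (hIoc ▸ hθ)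
      have hu' : u ∈ Metric.closedBall ω₂ ε := hball hu
      have eA := hcA ω₁ rfl θ hθ'
      have eB := hcB u hu' θ hθ'
      rw [norm_mul, norm_neg, norm_div, norm_mul,
        norm_pow, Complex.norm_exp, hMabs]
      have hnum : ((z + u) * ((r:ℂ) * Complex.exp (Complex.I * ((Real.pi:ℂ) - (θ:ℂ))))).re
          ≤ (‖z‖ + ‖ω₂‖ + ε) * r := by
        calc ((z + u) * ((r:ℂ) * Complex.exp (Complex.I * ((Real.pi:ℂ) - (θ:ℂ))))).re
            ≤ ‖(z + u) * ((r:ℂ)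
              * Complex.exp (Complex.I * ((Real.pi:ℂ) - (θ:ℂ))))‖ := Complex.re_le_norm _
          _ = ‖z + u‖ * r := by rw [norm_mul, hsabs]
          _ ≤ (‖z‖ + ‖ω₂‖ + ε) * r := by
              have h5 := norm_add_le z u
              have h6 := huabs u hu'
              nlinarith
      calc Real.exp (((z + u) * ((r:ℂ) * Complex.exp (Complex.I * ((Real.pi:ℂ) - (θ:ℂ))))).re)
            / (‖Complex.exp (ω₁ * ((r:ℂ)
                * Complex.exp (Complex.I * ((Real.pi:ℂ) - (θ:ℂ))))) - 1‖
              * ‖Complex.exp (u * ((r:ℂ)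
                * Complex.exp (Complex.I * ((Real.pi:ℂ) - (θ:ℂ))))) - 1‖ ^ 2) * r
          ≤ Real.exp ((‖z‖ + ‖ω₂‖ + ε) * r) / (cA * cB^2) * r := by
            apply mul_le_mul_of_nonneg_right _ hr0.le
            apply div_le_div₀ (Real.exp_pos _).le (Real.exp_le_exp.mpr hnum) (by positivity)
            exact mul_le_mul eA (pow_le_pow_left₀ hcB0.le eB 2) (by positivity)
              (norm_nonneg _)
        _ = Real.exp ((‖z‖ + ‖ω₂‖ + ε) * r) * r / (cA * cB^2) := by
            ring
    case bi => exact intervalIntegrable_const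
    case diff =>
      apply Eventually.of_forall
      intro θ hθ u hu
      have hθ' : θ ∈ Set.Icc (0:ℝ) Real.pi := Set.Ioc_subset_Icc_self (hIoc ▸ hθ)
      exact (hasDerivAt_Fa z ω₁ ((r:ℂ) * Complex.exp (Complex.I * ((Real.pi:ℂ) - (θ:ℂ)))) u
        (hsne θ) (hAarc θ hθ') (hBarc u (hball hu) θ hθ')).mul_const _
  -- assemble
  have hsum := (hd1.add hd2).add hd3
  simp only [contourIntegral]
  exact hsum

set_option maxHeartbeats 2000000 in
lemma partB (h1 : 0 < ω₁.re) (h2 : 0 < ω₂.re)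
    (hz0 : 0 < z.re) (hz1 : z.re < ω₁.re + ω₂.re)
    (hr0 : 0 < r) (hra : ‖ω₁‖ * r < 2 * Real.pi)
    (hrb : ‖ω₂‖ * r < 2 * Real.pi) :
    HasDerivAt (fun w => contourIntegral r (fun s =>
        -(Complex.exp ((w + ω₂) * s) /
          ((Complex.exp (ω₂ * s) - 1) ^ 2 * (Complex.exp (ω₁ * s) - 1) * s))))
      (contourIntegral r (fun s =>
        -(Complex.exp ((z + ω₂) * s) /
          ((Complex.exp (ω₂ * s) - 1) ^ 2 * (Complex.exp (ω₁ * s) - 1))))) z := by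
  set ε : ℝ := min (z.re/2) ((ω₁.re + ω₂.re - z.re)/4) with hεdef
  have hε : 0 < ε := lt_min (by linarith) (by linarith)
  have hε2 : ε ≤ z.re/2 := min_le_left _ _
  have hε4 : ε ≤ (ω₁.re + ω₂.re - z.re)/4 := min_le_right _ _
  have hball := (Metric.ball_subset_closedBall : Metric.ball z ε ⊆ Metric.closedBall z ε)
  have hur : ∀ w ∈ Metric.closedBall z ε, z.re - ε ≤ w.re ∧ w.re ≤ z.re + ε := by
    intro w hw
    rw [Metric.mem_closedBall, Complex.dist_eq] at hw
    have := Complex.abs_re_le_norm (w - z)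
    rw [Complex.sub_re] at this
    have := abs_le.mp (le_trans this hw)
    constructor <;> linarith [this.1, this.2]
  have huabs : ∀ w ∈ Metric.closedBall z ε, ‖w‖ ≤ ‖z‖ + ε := by
    intro w hw
    rw [Metric.mem_closedBall, Complex.dist_eq] at hw
    have hh := norm_sub_norm_le w z
    linarith
  -- arc lower bounds
  obtain ⟨cB, hcB0, hcB⟩ := exists_arc_bound r hr0 {ω₂} isCompact_singleton
    ⟨ω₂, rfl⟩ (by rintro u rfl; intro h0; rw [h0] at h2; simp at h2)
    (by rintro u rfl; exact hrb)
  obtain ⟨cA, hcA0, hcA⟩ := exists_arc_bound r hr0 {ω₁} isCompact_singleton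
    ⟨ω₁, rfl⟩ (by rintro u rfl; intro h0; rw [h0] at h1; simp at h1)
    (by rintro u rfl; exact hra)
  set c1 : ℝ := 1 - Real.exp (-(ω₁.re * r)) with hc1def
  set c2 : ℝ := 1 - Real.exp (-(ω₂.re * r)) with hc2def
  have hc1 : 0 < c1 := by
    have : Real.exp (-(ω₁.re * r)) < Real.exp 0 := Real.exp_lt_exp.mpr (by nlinarith)
    simp only [Real.exp_zero] at this
    simp only [hc1def]; linarith
  have hc2 : 0 < c2 := by
    have : Real.exp (-(ω₂.re * r)) < Real.exp 0 := Real.exp_lt_exp.mpr (by nlinarith)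
    simp only [Real.exp_zero] at this
    simp only [hc2def]; linarith
  have hmul : ∀ c : ℂ, Measurable fun x : ℝ => Complex.exp (c * (x:ℂ)) :=
    fun c => Complex.measurable_exp.comp (Complex.measurable_ofReal.const_mul c)
  have hre : ∀ (w : ℂ) (x : ℝ), (w * (x:ℂ)).re = w.re * x := fun w x => by
    simp [Complex.mul_re]
  have hnormF : ∀ (w : ℂ) (x : ℝ),
      ‖-(Complex.exp ((w+ω₂)*(x:ℂ)) / ((Complex.exp (ω₂*(x:ℂ))-1)^2
          * (Complex.exp (ω₁*(x:ℂ))-1) * (x:ℂ)))‖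
        = Real.exp ((w.re+ω₂.re)*x) / (‖Complex.exp (ω₂*(x:ℂ))-1‖^2
            * ‖Complex.exp (ω₁*(x:ℂ))-1‖ * |x|) := by
    intro w x
    rw [norm_neg, norm_div, norm_mul, norm_mul, norm_pow, Complex.norm_exp,
      hre, Complex.norm_real, Real.norm_eq_abs, Complex.add_re]
  have hnormF' : ∀ (w : ℂ) (x : ℝ),
      ‖-(Complex.exp ((w+ω₂)*(x:ℂ)) / ((Complex.exp (ω₂*(x:ℂ))-1)^2
          * (Complex.exp (ω₁*(x:ℂ))-1)))‖
        = Real.exp ((w.re+ω₂.re)*x) / (‖Complex.exp (ω₂*(x:ℂ))-1‖^2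
            * ‖Complex.exp (ω₁*(x:ℂ))-1‖) := by
    intro w x
    rw [norm_neg, norm_div, norm_mul, norm_pow, Complex.norm_exp, hre,
      Complex.add_re]
  have hA_tail : ∀ x : ℝ, x ≠ 0 → Complex.exp (ω₁ * (x:ℂ)) ≠ 1 := fun x hx =>
    exp_ne_one_of_re_ne_zero (by rw [hre]; exact mul_ne_zero h1.ne' hx)
  have hB_tail : ∀ x : ℝ, x ≠ 0 → Complex.exp (ω₂ * (x:ℂ)) ≠ 1 := fun x hx =>
    exp_ne_one_of_re_ne_zero (by rw [hre]; exact mul_ne_zero h2.ne' hx)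
  have hE_tail : ∀ x : ℝ, x ≠ 0 →
      (Complex.exp (ω₂*(x:ℂ))-1)^2 * (Complex.exp (ω₁*(x:ℂ))-1) ≠ 0 := fun x hx =>
    mul_ne_zero (pow_ne_zero 2 (sub_ne_zero.mpr (hB_tail x hx)))
      (sub_ne_zero.mpr (hA_tail x hx))
  have hmF : ∀ w : ℂ, Measurable fun x : ℝ => -(Complex.exp ((w+ω₂) * (x:ℂ)) /
      ((Complex.exp (ω₂*(x:ℂ)) - 1)^2 * (Complex.exp (ω₁*(x:ℂ)) - 1) * (x:ℂ))) := fun w =>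
    ((hmul (w+ω₂)).div (((((hmul ω₂).sub measurable_const).pow_const 2).mul
      ((hmul ω₁).sub measurable_const)).mul Complex.measurable_ofReal)).neg
  have hmF' : ∀ w : ℂ, Measurable fun x : ℝ => -(Complex.exp ((w+ω₂) * (x:ℂ)) /
      ((Complex.exp (ω₂*(x:ℂ)) - 1)^2 * (Complex.exp (ω₁*(x:ℂ)) - 1))) := fun w =>
    ((hmul (w+ω₂)).div ((((hmul ω₂).sub measurable_const).pow_const 2).mul
      ((hmul ω₁).sub measurable_const))).neg
  -- left tail
  have hd1 : HasDerivAt (fun w : ℂ => ∫ x : ℝ in Set.Iic (-r),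
        -(Complex.exp ((w + ω₂) * (x:ℂ)) /
          ((Complex.exp (ω₂ * (x:ℂ)) - 1) ^ 2 * (Complex.exp (ω₁ * (x:ℂ)) - 1) * (x:ℂ))))
      (∫ x : ℝ in Set.Iic (-r),
        -(Complex.exp ((z + ω₂) * (x:ℂ)) /
          ((Complex.exp (ω₂ * (x:ℂ)) - 1) ^ 2 * (Complex.exp (ω₁ * (x:ℂ)) - 1)))) z := by
    apply hasDerivAt_setIntegral_param
      (F := fun (w : ℂ) (x : ℝ) => -(Complex.exp ((w + ω₂) * (x:ℂ)) /
          ((Complex.exp (ω₂ * (x:ℂ)) - 1) ^ 2 * (Complex.exp (ω₁ * (x:ℂ)) - 1) * (x:ℂ))))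
      (F' := fun (w : ℂ) (x : ℝ) => -(Complex.exp ((w + ω₂) * (x:ℂ)) /
          ((Complex.exp (ω₂ * (x:ℂ)) - 1) ^ 2 * (Complex.exp (ω₁ * (x:ℂ)) - 1))))
      (bound := fun x : ℝ => Real.exp (((z.re - ε) + ω₂.re) * x) / (c2^2 * c1))
      measurableSet_Iic hε
      (fun w => (hmF w).aestronglyMeasurable)
      ?hint ((hmF' z).aestronglyMeasurable) ?hbound ?hbi ?hdiff
    case hint =>
      apply integrableOn_of_bound measurableSet_Iic (hmF z).aestronglyMeasurable
        ((integrableOn_exp_mul_Iic' (show 0 < z.re + ω₂.re by linarith) (-r)).div_const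
          (c2^2 * c1 * r))
      intro x hx
      have hx' : x ≤ -r := hx
      rw [hnormF]
      apply div_le_div₀ (Real.exp_pos _).le le_rfl (by positivity)
      have e1 : c1 ≤ ‖Complex.exp (ω₁*(x:ℂ))-1‖ := lb_neg h1 le_rfl hr0 hx'
      have e2 : c2 ≤ ‖Complex.exp (ω₂*(x:ℂ))-1‖ := lb_neg h2 le_rfl hr0 hx'
      have e3 : r ≤ |x| := by rw [abs_of_nonpos (by linarith)]; linarith
      exact mul_le_mul (mul_le_mul (pow_le_pow_left₀ hc2.le e2 2) e1 hc1.le (by positivity))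
        e3 hr0.le (by positivity)
    case hbound =>
      intro x hx w hw
      have hx' : x ≤ -r := hx
      have hw' := hur w (hball hw)
      show ‖-(Complex.exp ((w+ω₂)*(x:ℂ)) / ((Complex.exp (ω₂*(x:ℂ))-1)^2
          * (Complex.exp (ω₁*(x:ℂ))-1)))‖
        ≤ Real.exp (((z.re - ε) + ω₂.re) * x) / (c2^2 * c1)
      rw [hnormF']
      apply div_le_div₀ (Real.exp_pos _).le
        (Real.exp_le_exp.mpr (by nlinarith [hw'.1])) (by positivity)
      have e1 : c1 ≤ ‖Complex.exp (ω₁*(x:ℂ))-1‖ := lb_neg h1 le_rfl hr0 hx'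
      have e2 : c2 ≤ ‖Complex.exp (ω₂*(x:ℂ))-1‖ := lb_neg h2 le_rfl hr0 hx'
      exact mul_le_mul (pow_le_pow_left₀ hc2.le e2 2) e1 hc1.le (by positivity)
    case hbi =>
      exact (integrableOn_exp_mul_Iic' (by linarith) (-r)).div_const (c2^2 * c1)
    case hdiff =>
      intro x hx w hw
      have hx' : x ≤ -r := hx
      have hxne : x ≠ 0 := by intro h; rw [h] at hx'; linarith
      exact hasDerivAt_Fb ω₂ _ (x:ℂ) w (Complex.ofReal_ne_zero.mpr hxne) (hE_tail x hxne)
  -- right tail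
  have hd3 : HasDerivAt (fun w : ℂ => ∫ x : ℝ in Set.Ici r,
        -(Complex.exp ((w + ω₂) * (x:ℂ)) /
          ((Complex.exp (ω₂ * (x:ℂ)) - 1) ^ 2 * (Complex.exp (ω₁ * (x:ℂ)) - 1) * (x:ℂ))))
      (∫ x : ℝ in Set.Ici r,
        -(Complex.exp ((z + ω₂) * (x:ℂ)) /
          ((Complex.exp (ω₂ * (x:ℂ)) - 1) ^ 2 * (Complex.exp (ω₁ * (x:ℂ)) - 1)))) z := by
    apply hasDerivAt_setIntegral_param
      (F := fun (w : ℂ) (x : ℝ) => -(Complex.exp ((w + ω₂) * (x:ℂ)) /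
          ((Complex.exp (ω₂ * (x:ℂ)) - 1) ^ 2 * (Complex.exp (ω₁ * (x:ℂ)) - 1) * (x:ℂ))))
      (F' := fun (w : ℂ) (x : ℝ) => -(Complex.exp ((w + ω₂) * (x:ℂ)) /
          ((Complex.exp (ω₂ * (x:ℂ)) - 1) ^ 2 * (Complex.exp (ω₁ * (x:ℂ)) - 1))))
      (bound := fun x : ℝ => Real.exp (((z.re + ε) + ω₂.re - 2*ω₂.re - ω₁.re) * x) / (c2^2 * c1))
      measurableSet_Ici hε
      (fun w => (hmF w).aestronglyMeasurable)
      ?hint ((hmF' z).aestronglyMeasurable) ?hbound ?hbi ?hdiff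
    case hint =>
      apply integrableOn_of_bound measurableSet_Ici (hmF z).aestronglyMeasurable
        ((integrableOn_exp_mul_Ici
          (show z.re + ω₂.re - 2*ω₂.re - ω₁.re < 0 by linarith) r).div_const (c2^2 * c1 * r))
      intro x hx
      have hx' : r ≤ x := hx
      rw [hnormF]
      have e1 := lb_pos h1 le_rfl hr0 hx'
      have e2 := lb_pos h2 le_rfl hr0 hx'
      have e3 : r ≤ |x| := by rw [abs_of_pos (by linarith)]; linarith
      calc Real.exp ((z.re + ω₂.re) * x) / (‖Complex.exp (ω₂*(x:ℂ))-1‖^2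
            * ‖Complex.exp (ω₁*(x:ℂ))-1‖ * |x|)
          ≤ Real.exp ((z.re + ω₂.re) * x) / ((c2 * Real.exp (ω₂.re * x))^2
            * (c1 * Real.exp (ω₁.re * x)) * r) := by
            apply div_le_div₀ (Real.exp_pos _).le le_rfl (by positivity)
            apply mul_le_mul (mul_le_mul (pow_le_pow_left₀ (by positivity) e2 2) e1
              (by positivity) (by positivity)) e3 hr0.le (by positivity)
        _ = Real.exp ((z.re + ω₂.re - 2*ω₂.re - ω₁.re) * x) / (c2^2 * c1 * r) := by
            rw [show (z.re + ω₂.re) * x = (z.re + ω₂.re - 2*ω₂.re - ω₁.re) * x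
                + ((ω₂.re * x + ω₂.re * x) + ω₁.re * x) by ring,
              Real.exp_add, Real.exp_add, Real.exp_add, pow_two, pow_two]
            field_simp
    case hbound =>
      intro x hx w hw
      have hx' : r ≤ x := hx
      have hw' := hur w (hball hw)
      show ‖-(Complex.exp ((w+ω₂)*(x:ℂ)) / ((Complex.exp (ω₂*(x:ℂ))-1)^2
          * (Complex.exp (ω₁*(x:ℂ))-1)))‖
        ≤ Real.exp (((z.re + ε) + ω₂.re - 2*ω₂.re - ω₁.re) * x) / (c2^2 * c1)
      rw [hnormF']
      have e1 := lb_pos h1 le_rfl hr0 hx'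
      have e2 := lb_pos h2 le_rfl hr0 hx'
      calc Real.exp ((w.re + ω₂.re) * x) / (‖Complex.exp (ω₂*(x:ℂ))-1‖^2
            * ‖Complex.exp (ω₁*(x:ℂ))-1‖)
          ≤ Real.exp (((z.re + ε) + ω₂.re) * x) / ((c2 * Real.exp (ω₂.re * x))^2
            * (c1 * Real.exp (ω₁.re * x))) := by
            apply div_le_div₀ (Real.exp_pos _).le
              (Real.exp_le_exp.mpr (by nlinarith [hw'.2])) (by positivity)
            exact mul_le_mul (pow_le_pow_left₀ (by positivity) e2 2) e1 (by positivity)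
              (by positivity)
        _ = Real.exp (((z.re + ε) + ω₂.re - 2*ω₂.re - ω₁.re) * x) / (c2^2 * c1) := by
            rw [show ((z.re + ε) + ω₂.re) * x = ((z.re + ε) + ω₂.re - 2*ω₂.re - ω₁.re) * x
                + ((ω₂.re * x + ω₂.re * x) + ω₁.re * x) by ring,
              Real.exp_add, Real.exp_add, Real.exp_add, pow_two, pow_two]
            field_simp
    case hbi =>
      exact (integrableOn_exp_mul_Ici (by linarith) r).div_const (c2^2 * c1)
    case hdiff =>
      intro x hx w hw
      have hx' : r ≤ x := hx
      have hxne : x ≠ 0 := by intro h; rw [h] at hx'; linarith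
      exact hasDerivAt_Fb ω₂ _ (x:ℂ) w (Complex.ofReal_ne_zero.mpr hxne) (hE_tail x hxne)
  -- arc facts
  have hiarg : ∀ θ : ℝ, (Complex.I * ((Real.pi:ℂ) - (θ:ℂ))).re = 0 := by
    intro θ; simp [Complex.mul_re]
  have hexpI : ∀ θ : ℝ, ‖Complex.exp (Complex.I * ((Real.pi:ℂ) - (θ:ℂ)))‖ = 1 := by
    intro θ; rw [Complex.norm_exp, hiarg]; exact Real.exp_zero
  have hsabs : ∀ θ : ℝ, ‖(r:ℂ) * Complex.exp (Complex.I * ((Real.pi:ℂ) - (θ:ℂ)))‖ = r := by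
    intro θ; rw [norm_mul, Complex.norm_real, Real.norm_eq_abs, hexpI, abs_of_pos hr0, mul_one]
  have hsne : ∀ θ : ℝ, ((r:ℂ) * Complex.exp (Complex.I * ((Real.pi:ℂ) - (θ:ℂ)))) ≠ 0 := by
    intro θ
    exact mul_ne_zero (by exact_mod_cast hr0.ne') (Complex.exp_ne_zero _)
  have hMabs : ∀ θ : ℝ, ‖-Complex.I * (r:ℂ)
      * Complex.exp (Complex.I * ((Real.pi:ℂ) - (θ:ℂ)))‖ = r := by
    intro θ
    rw [norm_mul, norm_mul, hexpI, mul_one]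
    simp [abs_of_pos hr0]
  have hAarc : ∀ θ ∈ Set.Icc (0:ℝ) Real.pi,
      Complex.exp (ω₁ * ((r:ℂ) * Complex.exp (Complex.I * ((Real.pi:ℂ) - (θ:ℂ))))) ≠ 1 := by
    intro θ hθ heq
    have := hcA ω₁ rfl θ hθ
    rw [heq] at this
    simp at this
    linarith
  have hBarc : ∀ θ ∈ Set.Icc (0:ℝ) Real.pi,
      Complex.exp (ω₂ * ((r:ℂ) * Complex.exp (Complex.I * ((Real.pi:ℂ) - (θ:ℂ))))) ≠ 1 := by
    intro θ hθ heq
    have := hcB ω₂ rfl θ hθ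
    rw [heq] at this
    simp at this
    linarith
  have hEarc : ∀ θ ∈ Set.Icc (0:ℝ) Real.pi,
      (Complex.exp (ω₂ * ((r:ℂ) * Complex.exp (Complex.I * ((Real.pi:ℂ) - (θ:ℂ))))) - 1)^2
        * (Complex.exp (ω₁ * ((r:ℂ) * Complex.exp (Complex.I * ((Real.pi:ℂ) - (θ:ℂ))))) - 1)
        ≠ 0 := fun θ hθ =>
    mul_ne_zero (pow_ne_zero 2 (sub_ne_zero.mpr (hBarc θ hθ))) (sub_ne_zero.mpr (hAarc θ hθ))
  have hScont : Continuous (fun θ : ℝ => (r:ℂ) * Complex.exp (Complex.I * ((Real.pi:ℂ) - (θ:ℂ)))) :=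
    continuous_const.mul (Complex.continuous_exp.comp
      (continuous_const.mul (continuous_const.sub Complex.continuous_ofReal)))
  have hexpc : ∀ c : ℂ, Continuous (fun θ : ℝ =>
      Complex.exp (c * ((r:ℂ) * Complex.exp (Complex.I * ((Real.pi:ℂ) - (θ:ℂ)))))) := fun c =>
    Complex.continuous_exp.comp (continuous_const.mul hScont)
  have hMcont : Continuous (fun θ : ℝ => -Complex.I * (r:ℂ)
      * Complex.exp (Complex.I * ((Real.pi:ℂ) - (θ:ℂ)))) :=
    continuous_const.mul (Complex.continuous_exp.comp
      (continuous_const.mul (continuous_const.sub Complex.continuous_ofReal)))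
  have hIoc : Set.uIoc (0:ℝ) Real.pi = Set.Ioc (0:ℝ) Real.pi := Set.uIoc_of_le Real.pi_pos.le
  -- the arc integral
  have hd2 : HasDerivAt (fun w : ℂ => ∫ θ : ℝ in (0:ℝ)..Real.pi,
        -(Complex.exp ((w + ω₂) * ((r:ℂ) * Complex.exp (Complex.I * ((Real.pi:ℂ) - (θ:ℂ))))) /
          ((Complex.exp (ω₂ * ((r:ℂ) * Complex.exp (Complex.I * ((Real.pi:ℂ) - (θ:ℂ))))) - 1) ^ 2
            * (Complex.exp (ω₁ * ((r:ℂ) * Complex.exp (Complex.I * ((Real.pi:ℂ) - (θ:ℂ))))) - 1)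
            * ((r:ℂ) * Complex.exp (Complex.I * ((Real.pi:ℂ) - (θ:ℂ))))))
          * (-Complex.I * (r:ℂ) * Complex.exp (Complex.I * ((Real.pi:ℂ) - (θ:ℂ)))))
      (∫ θ : ℝ in (0:ℝ)..Real.pi,
        -(Complex.exp ((z + ω₂) * ((r:ℂ) * Complex.exp (Complex.I * ((Real.pi:ℂ) - (θ:ℂ))))) /
          ((Complex.exp (ω₂ * ((r:ℂ) * Complex.exp (Complex.I * ((Real.pi:ℂ) - (θ:ℂ))))) - 1) ^ 2
            * (Complex.exp (ω₁ * ((r:ℂ) * Complex.exp (Complex.I * ((Real.pi:ℂ) - (θ:ℂ))))) - 1)))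
          * (-Complex.I * (r:ℂ) * Complex.exp (Complex.I * ((Real.pi:ℂ) - (θ:ℂ))))) z := by
    apply (intervalIntegral.hasDerivAt_integral_of_dominated_loc_of_deriv_le
      (F := fun (w : ℂ) (θ : ℝ) =>
        -(Complex.exp ((w + ω₂) * ((r:ℂ) * Complex.exp (Complex.I * ((Real.pi:ℂ) - (θ:ℂ))))) /
          ((Complex.exp (ω₂ * ((r:ℂ) * Complex.exp (Complex.I * ((Real.pi:ℂ) - (θ:ℂ))))) - 1) ^ 2
            * (Complex.exp (ω₁ * ((r:ℂ) * Complex.exp (Complex.I * ((Real.pi:ℂ) - (θ:ℂ))))) - 1)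
            * ((r:ℂ) * Complex.exp (Complex.I * ((Real.pi:ℂ) - (θ:ℂ))))))
          * (-Complex.I * (r:ℂ) * Complex.exp (Complex.I * ((Real.pi:ℂ) - (θ:ℂ)))))
      (F' := fun (w : ℂ) (θ : ℝ) =>
        -(Complex.exp ((w + ω₂) * ((r:ℂ) * Complex.exp (Complex.I * ((Real.pi:ℂ) - (θ:ℂ))))) /
          ((Complex.exp (ω₂ * ((r:ℂ) * Complex.exp (Complex.I * ((Real.pi:ℂ) - (θ:ℂ))))) - 1) ^ 2
            * (Complex.exp (ω₁ * ((r:ℂ) * Complex.exp (Complex.I * ((Real.pi:ℂ) - (θ:ℂ))))) - 1)))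
          * (-Complex.I * (r:ℂ) * Complex.exp (Complex.I * ((Real.pi:ℂ) - (θ:ℂ)))))
      (bound := fun _ : ℝ =>
        Real.exp ((‖z‖ + ε + ‖ω₂‖) * r) * r / (cB^2 * cA))
      (Metric.ball_mem_nhds _ hε) ?meas ?int ?meas' ?bound ?bi ?diff).2
    case meas =>
      apply Eventually.of_forall
      intro w
      exact ((((hexpc (w + ω₂)).measurable.div
        (((((hexpc ω₂).measurable.sub measurable_const).pow_const 2).mul
          ((hexpc ω₁).measurable.sub measurable_const)).mul hScont.measurable)).neg).mul
        hMcont.measurable).aestronglyMeasurable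
    case int =>
      apply ContinuousOn.intervalIntegrable
      rw [Set.uIcc_of_le Real.pi_pos.le]
      apply ContinuousOn.mul _ hMcont.continuousOn
      apply ContinuousOn.neg
      apply ContinuousOn.div (hexpc (z + ω₂)).continuousOn
        (((((hexpc ω₂).continuousOn.sub continuousOn_const).pow 2).mul
          ((hexpc ω₁).continuousOn.sub continuousOn_const)).mul hScont.continuousOn)
      intro θ hθ
      exact mul_ne_zero (hEarc θ hθ) (hsne θ)
    case meas' =>
      exact ((((hexpc (z + ω₂)).measurable.div
        ((((hexpc ω₂).measurable.sub measurable_const).pow_const 2).mul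
          ((hexpc ω₁).measurable.sub measurable_const))).neg).mul
        hMcont.measurable).aestronglyMeasurable
    case bound =>
      apply Eventually.of_forall
      intro θ hθ w hw
      have hθ' : θ ∈ Set.Icc (0:ℝ) Real.pi := Set.Ioc_subset_Icc_self (hIoc ▸ hθ)
      have hw' : w ∈ Metric.closedBall z ε := hball hw
      have eA := hcA ω₁ rfl θ hθ'
      have eB := hcB ω₂ rfl θ hθ'
      rw [norm_mul, norm_neg, norm_div, norm_mul,
        norm_pow, Complex.norm_exp, hMabs]
      have hnum : ((w + ω₂) * ((r:ℂ) * Complex.exp (Complex.I * ((Real.pi:ℂ) - (θ:ℂ))))).re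
          ≤ (‖z‖ + ε + ‖ω₂‖) * r := by
        calc ((w + ω₂) * ((r:ℂ) * Complex.exp (Complex.I * ((Real.pi:ℂ) - (θ:ℂ))))).re
            ≤ ‖(w + ω₂) * ((r:ℂ)
              * Complex.exp (Complex.I * ((Real.pi:ℂ) - (θ:ℂ))))‖ := Complex.re_le_norm _
          _ = ‖w + ω₂‖ * r := by rw [norm_mul, hsabs]
          _ ≤ (‖z‖ + ε + ‖ω₂‖) * r := by
              have h5 := norm_add_le w ω₂
              have h6 := huabs w hw'
              nlinarith
      calc Real.exp (((w + ω₂) * ((r:ℂ) * Complex.exp (Complex.I * ((Real.pi:ℂ) - (θ:ℂ))))).re)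
            / (‖Complex.exp (ω₂ * ((r:ℂ)
                * Complex.exp (Complex.I * ((Real.pi:ℂ) - (θ:ℂ))))) - 1‖ ^ 2
              * ‖Complex.exp (ω₁ * ((r:ℂ)
                * Complex.exp (Complex.I * ((Real.pi:ℂ) - (θ:ℂ))))) - 1‖) * r
          ≤ Real.exp ((‖z‖ + ε + ‖ω₂‖) * r) / (cB^2 * cA) * r := by
            apply mul_le_mul_of_nonneg_right _ hr0.le
            apply div_le_div₀ (Real.exp_pos _).le (Real.exp_le_exp.mpr hnum) (by positivity)
            exact mul_le_mul (pow_le_pow_left₀ hcB0.le eB 2) eA hcA0.le (by positivity)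
        _ = Real.exp ((‖z‖ + ε + ‖ω₂‖) * r) * r / (cB^2 * cA) := by
            ring
    case bi => exact intervalIntegrable_const
    case diff =>
      apply Eventually.of_forall
      intro θ hθ w hw
      have hθ' : θ ∈ Set.Icc (0:ℝ) Real.pi := Set.Ioc_subset_Icc_self (hIoc ▸ hθ)
      exact (hasDerivAt_Fb ω₂ _ ((r:ℂ) * Complex.exp (Complex.I * ((Real.pi:ℂ) - (θ:ℂ)))) w
        (hsne θ) (hEarc θ hθ')).mul_const _
  -- assemble
  have hsum := (hd1.add hd2).add hd3
  simp only [contourIntegral]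
  exact hsum

end PartA


/-- The relation `∂/∂ω₂ log F(z|ω₁,ω₂) = ∂/∂z log G(z|ω₂,ω₁)` at the level of the
integral representations: both sides are differentiable and the derivatives agree,
being given by the displayed contour integral. -/
theorem deriv_logF_eq_deriv_logG
    (ω₁ ω₂ z : ℂ) (h1 : 0 < ω₁.re) (h2 : 0 < ω₂.re)
    (hz0 : 0 < z.re) (hz1 : z.re < (ω₁ + ω₂).re)
    (r : ℝ) (hr0 : 0 < r) (hr1 : r < 2 * Real.pi / max ‖ω₁‖ ‖ω₂‖) :
    DifferentiableAt ℂ (fun u => contourIntegral r (fun s =>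
        Complex.exp (z * s) /
          ((Complex.exp (ω₁ * s) - 1) * (Complex.exp (u * s) - 1) * s))) ω₂ ∧
    DifferentiableAt ℂ (fun w => contourIntegral r (fun s =>
        -(Complex.exp ((w + ω₂) * s) /
          ((Complex.exp (ω₂ * s) - 1) ^ 2 * (Complex.exp (ω₁ * s) - 1) * s)))) z ∧
    deriv (fun u => contourIntegral r (fun s =>
        Complex.exp (z * s) /
          ((Complex.exp (ω₁ * s) - 1) * (Complex.exp (u * s) - 1) * s))) ω₂ =
      -contourIntegral r (fun s =>
        Complex.exp ((z + ω₂) * s) /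
          ((Complex.exp (ω₁ * s) - 1) * (Complex.exp (ω₂ * s) - 1) ^ 2)) ∧
    deriv (fun w => contourIntegral r (fun s =>
        -(Complex.exp ((w + ω₂) * s) /
          ((Complex.exp (ω₂ * s) - 1) ^ 2 * (Complex.exp (ω₁ * s) - 1) * s)))) z =
      -contourIntegral r (fun s =>
        Complex.exp ((z + ω₂) * s) /
          ((Complex.exp (ω₁ * s) - 1) * (Complex.exp (ω₂ * s) - 1) ^ 2)) := by
  have hω₁ : ω₁ ≠ 0 := fun h => by rw [h] at h1; simp at h1
  have hω₂ : ω₂ ≠ 0 := fun h => by rw [h] at h2; simp at h2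
  have hmax : 0 < max (‖ω₁‖) (‖ω₂‖) :=
    lt_max_of_lt_left (norm_pos_iff.mpr hω₁)
  have hrm : r * max (‖ω₁‖) (‖ω₂‖) < 2 * Real.pi :=
    (lt_div_iff₀ hmax).mp hr1
  have hra : ‖ω₁‖ * r < 2 * Real.pi := by
    have := le_max_left (‖ω₁‖) (‖ω₂‖)
    nlinarith
  have hrb : ‖ω₂‖ * r < 2 * Real.pi := by
    have := le_max_right (‖ω₁‖) (‖ω₂‖)
    nlinarith
  have hz1' : z.re < ω₁.re + ω₂.re := by
    rw [Complex.add_re] at hz1; exact hz1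
  have ha := partA ω₁ ω₂ z r h1 h2 hz0 hz1' hr0 hra hrb
  have hb := partB ω₁ ω₂ z r h1 h2 hz0 hz1' hr0 hra hrb
  have keyA : contourIntegral r (fun s =>
        -(Complex.exp ((z + ω₂) * s) /
          ((Complex.exp (ω₁ * s) - 1) * (Complex.exp (ω₂ * s) - 1) ^ 2)))
      = -contourIntegral r (fun s =>
        Complex.exp ((z + ω₂) * s) /
          ((Complex.exp (ω₁ * s) - 1) * (Complex.exp (ω₂ * s) - 1) ^ 2)) :=
    contourIntegral_neg r _
  have keyB : contourIntegral r (fun s =>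
        -(Complex.exp ((z + ω₂) * s) /
          ((Complex.exp (ω₂ * s) - 1) ^ 2 * (Complex.exp (ω₁ * s) - 1))))
      = -contourIntegral r (fun s =>
        Complex.exp ((z + ω₂) * s) /
          ((Complex.exp (ω₁ * s) - 1) * (Complex.exp (ω₂ * s) - 1) ^ 2)) := by
    rw [show (fun s => -(Complex.exp ((z + ω₂) * s) /
          ((Complex.exp (ω₂ * s) - 1) ^ 2 * (Complex.exp (ω₁ * s) - 1))))
        = (fun s => -(Complex.exp ((z + ω₂) * s) /
          ((Complex.exp (ω₁ * s) - 1) * (Complex.exp (ω₂ * s) - 1) ^ 2))) from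
      funext fun s => by ring_nf]
    exact contourIntegral_neg r _
  refine ⟨ha.differentiableAt, hb.differentiableAt, ?_, ?_⟩
  · rw [ha.deriv]
    exact keyA
  · rw [hb.deriv]
    exact keyB
end

section
/- With the definitions in the context, the conifold Riemann–Hilbert problem has at most one solution: if (B_n, D_n)_{n∈ℤ} and (B'_n, D'_n)_{n∈ℤ} are two families of holomorphic nowhere-vanishing functions on the regions 𝒱(n) satisfying conditions (i)–(iv), then B_n = B'_n and D_n = D'_n for all n ∈ ℤ. -/
open Complex MeasureTheory Filter Topology

/-- `x = exp(-2πi v/t)`. -/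
noncomputable def xfun (v t : ℂ) : ℂ := Complex.exp (-(2 * (Real.pi : ℂ) * Complex.I * v) / t)

/-- `q = exp(-2πi w/t)`. -/
noncomputable def qfun (w t : ℂ) : ℂ := Complex.exp (-(2 * (Real.pi : ℂ) * Complex.I * w) / t)

/-- The open half-plane `ℋ(n)` of directions within angle `π/2` of the ray
`ℝ_{>0}·2πi(v + n·w)`. -/
def Hplane (v w : ℂ) (n : ℤ) : Set ℂ :=
  {t : ℂ | t ≠ 0 ∧ 0 < (t / (2 * (Real.pi : ℂ) * Complex.I * (v + (n : ℂ) * w))).re}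

/-- The region `𝒱(n) = ℋ(n-1) ∪ ℋ(n)`. -/
def Vreg (v w : ℂ) (n : ℤ) : Set ℂ := Hplane v w (n - 1) ∪ Hplane v w n

/-- The open convex sector `Σ(0)` bounded by the rays `ℓ_{-1}` and `ℓ_0`. -/
def Sigma0 (v w : ℂ) : Set ℂ :=
  {t : ℂ | ∃ a b : ℝ, 0 < a ∧ 0 < b ∧
    t = (a : ℂ) * (2 * (Real.pi : ℂ) * Complex.I * (v - w)) +
        (b : ℂ) * (2 * (Real.pi : ℂ) * Complex.I * v)}

/-- The region `-i·Σ(0)`. -/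
def negISigma0 (v w : ℂ) : Set ℂ := {t : ℂ | ∃ u ∈ Sigma0 v w, t = -Complex.I * u}

/-- A set of the form `{ρ·e^{iθ} : ρ > 0, θ₁ ≤ θ ≤ θ₂}`. -/
def SectorShaped (S : Set ℂ) : Prop :=
  ∃ θ₁ θ₂ : ℝ, θ₁ ≤ θ₂ ∧
    S = {z : ℂ | ∃ ρ θ : ℝ, 0 < ρ ∧ θ₁ ≤ θ ∧ θ ≤ θ₂ ∧
          z = (ρ : ℂ) * Complex.exp (Complex.I * (θ : ℂ))}

/-- A solution of the conifold Riemann–Hilbert problem: families of holomorphic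
nowhere-vanishing functions `B_n, D_n` on the regions `𝒱(n)` satisfying the limit
condition at `0`, polynomial growth at `∞`, the jumping relations across the rays
`ℓ_n`, and the reflection relations on `-i·Σ(0)`. -/
structure ConifoldRHSolution (v w : ℂ) where
  B : ℤ → ℂ → ℂ
  D : ℤ → ℂ → ℂ
  holoB : ∀ n : ℤ, DifferentiableOn ℂ (B n) (Vreg v w n)
  holoD : ∀ n : ℤ, DifferentiableOn ℂ (D n) (Vreg v w n)
  neB : ∀ n : ℤ, ∀ t ∈ Vreg v w n, B n t ≠ 0
  neD : ∀ n : ℤ, ∀ t ∈ Vreg v w n, D n t ≠ 0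
  limB : ∀ n : ℤ, ∀ S : Set ℂ, SectorShaped S → S ⊆ Vreg v w n →
    Filter.Tendsto (B n) (nhdsWithin 0 S) (nhds 1)
  limD : ∀ n : ℤ, ∀ S : Set ℂ, SectorShaped S → S ⊆ Vreg v w n →
    Filter.Tendsto (D n) (nhdsWithin 0 S) (nhds 1)
  growth : ∀ n : ℤ, ∃ k : ℝ, 0 < k ∧ ∀ S : Set ℂ, SectorShaped S → S ⊆ Vreg v w n →
    ∃ M : ℝ, ∀ t ∈ S, M < ‖t‖ →
      ‖t‖ ^ (-k) < ‖B n t‖ ∧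
      ‖B n t‖ < ‖t‖ ^ k ∧
      ‖t‖ ^ (-k) < ‖D n t‖ ∧
      ‖D n t‖ < ‖t‖ ^ k
  jumpB : ∀ n : ℤ, ∀ t ∈ Hplane v w n,
    B (n + 1) t = B n t * (1 - xfun v t * qfun w t ^ n)⁻¹
  jumpD : ∀ n : ℤ, ∀ t ∈ Hplane v w n,
    D (n + 1) t = D n t * (1 - xfun v t * qfun w t ^ n) ^ (-n)
  reflB : ∀ t ∈ negISigma0 v w,
    B 0 t * B 0 (-t) =
      (∏' n : ℕ, (1 - xfun v t * qfun w t ^ n)) *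
      (∏' n : ℕ, (1 - (xfun v t)⁻¹ * qfun w t ^ (n + 1)))⁻¹
  reflD : ∀ t ∈ negISigma0 v w,
    D 0 t * D 0 (-t) =
      (∏' n : ℕ, (1 - xfun v t * qfun w t ^ n) ^ n) *
      (∏' n : ℕ, (1 - (xfun v t)⁻¹ * qfun w t ^ (n + 1)) ^ (n + 1)) *
      (∏' k : ℕ, (1 - qfun w t ^ (k + 1)) ^ (-(2 * ((k : ℤ) + 1))))

open Polynomial


/-- An entire function with polynomial growth is a polynomial. -/
theorem entire_poly_growth (K : ℕ) :
    ∀ (f : ℂ → ℂ), Differentiable ℂ f → ∀ C : ℝ,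
      (∀ z, ‖f z‖ ≤ C * (1 + ‖z‖) ^ K) → ∃ P : ℂ[X], ∀ z, f z = P.eval z := by
  induction K with
  | zero =>
    intro f hf C hC
    have hb : Bornology.IsBounded (Set.range f) := by
      rw [Metric.isBounded_iff_subset_closedBall 0]
      refine ⟨C, ?_⟩
      rintro y ⟨z, rfl⟩
      simpa [Metric.mem_closedBall] using (hC z).trans (by simp)
    exact ⟨Polynomial.C (f 0), fun z => by simpa using hf.apply_eq_apply_of_bounded hb z 0⟩
  | succ K ih =>
    intro f hf C hC
    have hC0 : 0 ≤ C := le_trans (norm_nonneg (f 0)) ((hC 0).trans (by simp))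
    set g : ℂ → ℂ := dslope f 0 with hg
    have hgd : Differentiable ℂ g := by
      intro z
      rcases eq_or_ne z 0 with rfl | hz
      · obtain ⟨p, hp⟩ := hf.analyticAt 0
        exact (HasFPowerSeriesAt.has_fpower_series_dslope_fslope hp).analyticAt.differentiableAt
      · exact (differentiableAt_dslope_of_ne hz).2 (hf z)
    have key : ∀ z : ℂ, z * g z = f z - f 0 := by
      intro z
      have := sub_smul_dslope f 0 z
      simpa [smul_eq_mul] using this
    -- bound for g on the closed unit ball
    obtain ⟨M, hM⟩ := (isCompact_closedBall (0:ℂ) 1).exists_bound_of_continuousOn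
      hgd.continuous.continuousOn
    have hM0 : 0 ≤ M := le_trans (norm_nonneg _) (hM 0 (by simp))
    refine ?_
    have hgb : ∀ z : ℂ, ‖g z‖ ≤ (max (4 * C) M) * (1 + ‖z‖) ^ K := by
      intro z
      rcases le_or_gt ‖z‖ 1 with hz1 | hz1
      · have : ‖g z‖ ≤ M := hM z (by simpa [Metric.mem_closedBall] using hz1)
        calc ‖g z‖ ≤ M := this
          _ ≤ max (4 * C) M * 1 := by simp [le_max_right]
          _ ≤ max (4 * C) M * (1 + ‖z‖) ^ K := by
              apply mul_le_mul_of_nonneg_left _ (le_trans hM0 (le_max_right _ _))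
              exact one_le_pow₀ (by linarith [norm_nonneg z])
      · have hz0 : z ≠ 0 := by intro h; simp [h] at hz1; linarith
        have h1 : ‖z‖ * ‖g z‖ = ‖f z - f 0‖ := by
          rw [← norm_mul, key z]
        have h2 : ‖f z - f 0‖ ≤ 2 * (C * (1 + ‖z‖) ^ (K + 1)) := by
          have := norm_sub_le (f z) (f 0)
          have h0 : ‖f 0‖ ≤ C * (1 + ‖z‖) ^ (K + 1) := by
            refine (hC 0).trans ?_
            simp only [norm_zero]
            gcongr
            exact norm_nonneg z
          have hz := hC z
          linarith
        have h3 : (1 + ‖z‖) ^ (K + 1) ≤ 2 * ‖z‖ * (1 + ‖z‖) ^ K := by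
          rw [pow_succ]
          rw [mul_comm (2 * ‖z‖)]
          apply mul_le_mul_of_nonneg_left (by linarith) (by positivity)
        have h4 : ‖z‖ * ‖g z‖ ≤ 4 * C * ‖z‖ * (1 + ‖z‖) ^ K := by
          calc ‖z‖ * ‖g z‖ = ‖f z - f 0‖ := h1
            _ ≤ 2 * (C * (1 + ‖z‖) ^ (K + 1)) := h2
            _ ≤ 2 * (C * (2 * ‖z‖ * (1 + ‖z‖) ^ K)) := by
                apply mul_le_mul_of_nonneg_left _ (by norm_num)
                exact mul_le_mul_of_nonneg_left h3 hC0
            _ = 4 * C * ‖z‖ * (1 + ‖z‖) ^ K := by ring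
        have hzpos : 0 < ‖z‖ := by linarith
        have := (mul_le_mul_iff_right₀ hzpos).mp (by
          calc ‖z‖ * ‖g z‖ ≤ 4 * C * ‖z‖ * (1 + ‖z‖) ^ K := h4
            _ = ‖z‖ * (4 * C * (1 + ‖z‖) ^ K) := by ring)
        calc ‖g z‖ ≤ 4 * C * (1 + ‖z‖) ^ K := this
          _ ≤ max (4 * C) M * (1 + ‖z‖) ^ K := by
              apply mul_le_mul_of_nonneg_right (le_max_left _ _) (by positivity)
    obtain ⟨Q, hQ⟩ := ih g hgd _ hgb
    refine ⟨Polynomial.C (f 0) + Polynomial.X * Q, fun z => ?_⟩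
    have := key z
    rw [hQ z] at this
    simp only [eval_add, eval_C, eval_mul, eval_X]
    linear_combination -this


theorem entire_reflection_eq_one {f : ℂ → ℂ} (hf : Differentiable ℂ f) (h0 : f 0 = 1)
    (hrefl : ∀ z, f z * f (-z) = 1) (K : ℕ) (C : ℝ)
    (hC : ∀ z, ‖f z‖ ≤ C * (1 + ‖z‖) ^ K) : ∀ z, f z = 1 := by
  obtain ⟨P, hP⟩ := entire_poly_growth K f hf C hC
  have hmul : P * P.comp (-Polynomial.X) = 1 := by
    apply Polynomial.funext
    intro r
    simp only [Polynomial.eval_mul, Polynomial.eval_comp, Polynomial.eval_neg, Polynomial.eval_X,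
      Polynomial.eval_one]
    rw [← hP, ← hP]
    exact hrefl r
  have hu : IsUnit P := IsUnit.of_mul_eq_one _ hmul
  have hdeg : P.degree = 0 := Polynomial.isUnit_iff_degree_eq_zero.mp hu
  have hPC : P = Polynomial.C (P.coeff 0) := Polynomial.eq_C_of_degree_le_zero hdeg.le
  intro z
  have h1 : f z = P.coeff 0 := by rw [hP z, hPC]; simp
  have h2 : f 0 = P.coeff 0 := by rw [hP 0, hPC]; simp
  rw [h1, ← h2, h0]

/-! ## Geometry of the half-planes -/

noncomputable def uu (v w : ℂ) (n : ℤ) : ℂ := 2 * (Real.pi : ℂ) * Complex.I * (v + (n : ℂ) * w)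

section Geometry

variable {v w : ℂ}

lemma uu_ne (hvw : ∀ n : ℤ, v + (n : ℂ) * w ≠ 0) (n : ℤ) : uu v w n ≠ 0 := by
  unfold uu
  have := hvw n
  have hpi : (Real.pi : ℂ) ≠ 0 := by exact_mod_cast Real.pi_ne_zero
  simp [Complex.I_ne_zero, this, hpi]

lemma mem_Hplane_iff (hvw : ∀ n : ℤ, v + (n : ℂ) * w ≠ 0) {n : ℤ} {t : ℂ} :
    t ∈ Hplane v w n ↔ t ≠ 0 ∧ 0 < (t * (starRingEnd ℂ) (uu v w n)).re := by
  have hns : 0 < Complex.normSq (uu v w n) := Complex.normSq_pos.2 (uu_ne hvw n)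
  have he : (t / uu v w n).re
      = (t * (starRingEnd ℂ) (uu v w n)).re / Complex.normSq (uu v w n) := by
    rw [Complex.div_re, Complex.mul_re, Complex.conj_re, Complex.conj_im]
    unfold Complex.normSq
    simp only [MonoidWithZeroHom.coe_mk, ZeroHom.coe_mk]
    ring
  constructor
  · rintro ⟨ht, h⟩
    refine ⟨ht, ?_⟩
    rw [show (2 * (Real.pi : ℂ) * Complex.I * (v + (n : ℂ) * w)) = uu v w n from rfl] at h
    rw [he] at h
    exact (div_pos_iff.mp h).resolve_right (fun h' => absurd hns (not_lt.2 h'.2.le)) |>.1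
  · rintro ⟨ht, h⟩
    refine ⟨ht, ?_⟩
    show 0 < (t / uu v w n).re
    rw [he]
    exact div_pos h hns

lemma re_mul_conj_uu_linear (t : ℂ) (n : ℤ) :
    (t * (starRingEnd ℂ) (uu v w n)).re
      = (t * (starRingEnd ℂ) (uu v w 0)).re
        + (n : ℝ) * (t * (starRingEnd ℂ) (2 * (Real.pi : ℂ) * Complex.I * w)).re := by
  unfold uu
  simp only [Complex.mul_re, Complex.conj_re, Complex.conj_im, Complex.add_re, Complex.add_im,
    Complex.mul_im, Complex.I_re, Complex.I_im, Complex.ofReal_re, Complex.ofReal_im,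
    Complex.intCast_re, Complex.intCast_im, Complex.re_ofNat, Complex.im_ofNat]
  push_cast
  ring

lemma im_v_conj_w_pos (hw : w ≠ 0) (him : 0 < (v / w).im) :
    0 < (v * (starRingEnd ℂ) w).im := by
  have h : (v / w) * ((Complex.normSq w : ℝ) : ℂ) = v * (starRingEnd ℂ) w := by
    rw [← Complex.mul_conj, ← mul_assoc, div_mul_cancel₀ _ hw]
  rw [← h]
  simpa [Complex.mul_im] using mul_pos him (Complex.normSq_pos.2 hw)

lemma Hplane_convex (hvw : ∀ n : ℤ, v + (n : ℂ) * w ≠ 0) {a b c : ℤ} (hac : a ≤ c) (hcb : c ≤ b)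
    {t : ℂ} (ha : t ∈ Hplane v w a) (hb : t ∈ Hplane v w b) : t ∈ Hplane v w c := by
  rw [mem_Hplane_iff hvw] at ha hb ⊢
  refine ⟨ha.1, ?_⟩
  set A := (t * (starRingEnd ℂ) (uu v w 0)).re with hA
  set B := (t * (starRingEnd ℂ) (2 * (Real.pi : ℂ) * Complex.I * w)).re with hB
  have h1 := ha.2; have h2 := hb.2
  rw [re_mul_conj_uu_linear] at h1 h2 ⊢
  rcases eq_or_lt_of_le hac with rfl | hac'
  · exact h1
  rcases eq_or_lt_of_le hcb with rfl | hcb'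
  · exact h2
  have hac'' : (a : ℝ) < (c : ℝ) := by exact_mod_cast hac'
  have hcb'' : (c : ℝ) < (b : ℝ) := by exact_mod_cast hcb'
  have h3 : (0:ℝ) < ((b:ℝ) - c) * ((t * (starRingEnd ℂ) (uu v w 0)).re + (a:ℝ) * B)
      + ((c:ℝ) - a) * ((t * (starRingEnd ℂ) (uu v w 0)).re + (b:ℝ) * B) :=
    add_pos (mul_pos (by linarith) h1) (mul_pos (by linarith) h2)
  nlinarith [h3, sub_pos.2 (hac''.trans hcb'')]

lemma ray_re_eval (c : ℝ) (n : ℤ) :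
    (((c : ℂ) * w) * (starRingEnd ℂ) (uu v w n)).re
      = -(2 * Real.pi * c * (v * (starRingEnd ℂ) w).im) := by
  unfold uu
  simp only [Complex.mul_re, Complex.mul_im, Complex.conj_re, Complex.conj_im, Complex.add_re,
    Complex.add_im, Complex.I_re, Complex.I_im, Complex.ofReal_re, Complex.ofReal_im,
    Complex.intCast_re, Complex.intCast_im, Complex.re_ofNat, Complex.im_ofNat]
  ring

lemma neg_ray_mem (hw : w ≠ 0) (hvw : ∀ n : ℤ, v + (n : ℂ) * w ≠ 0) (him : 0 < (v / w).im)
    {c : ℝ} (hc : c < 0) (n : ℤ) : (c : ℂ) * w ∈ Hplane v w n := by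
  rw [mem_Hplane_iff hvw]
  constructor
  · simp only [ne_eq, mul_eq_zero, not_or, Complex.ofReal_eq_zero]
    exact ⟨hc.ne, hw⟩
  · rw [ray_re_eval]
    have h := im_v_conj_w_pos hw him
    nlinarith [Real.pi_pos, mul_pos (neg_pos.2 hc) h]

lemma pos_ray_not_mem (hw : w ≠ 0) (him : 0 < (v / w).im)
    {c : ℝ} (hc : 0 ≤ c) (n : ℤ) (hmem : (c : ℂ) * w ∈ Hplane v w n)
    (hvw : ∀ n : ℤ, v + (n : ℂ) * w ≠ 0) : False := by
  rw [mem_Hplane_iff hvw] at hmem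
  have h := hmem.2
  rw [ray_re_eval] at h
  have h2 := im_v_conj_w_pos hw him
  nlinarith [Real.pi_pos, mul_nonneg hc h2.le]

lemma exists_mem_Hplane (hw : w ≠ 0) (hvw : ∀ n : ℤ, v + (n : ℂ) * w ≠ 0)
    (him : 0 < (v / w).im) {t : ℂ} (ht : t ≠ 0)
    (hray : ¬ ∃ c : ℝ, 0 < c ∧ t = (c : ℂ) * w) : ∃ n : ℤ, t ∈ Hplane v w n := by
  set A := (t * (starRingEnd ℂ) (uu v w 0)).re with hA
  set B := (t * (starRingEnd ℂ) (2 * (Real.pi : ℂ) * Complex.I * w)).re with hB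
  rcases lt_trichotomy B 0 with hB0 | hB0 | hB0
  · obtain ⟨n, hn⟩ := exists_int_lt ((-A) / B)
    refine ⟨n, (mem_Hplane_iff hvw).2 ⟨ht, ?_⟩⟩
    rw [re_mul_conj_uu_linear, ← hA, ← hB]
    have h4 := mul_lt_mul_of_neg_right hn hB0
    rw [div_mul_cancel₀ _ hB0.ne] at h4
    linarith
  · -- B = 0 : t lies on the line ℝ·w
    have hBim : (t * (starRingEnd ℂ) w).im = 0 := by
      have : B = 2 * Real.pi * (t * (starRingEnd ℂ) w).im := by
        rw [hB]
        simp only [Complex.mul_re, Complex.mul_im, Complex.conj_re, Complex.conj_im,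
          Complex.I_re, Complex.I_im, Complex.ofReal_re, Complex.ofReal_im,
          Complex.re_ofNat, Complex.im_ofNat]
        ring
      have h2 : 2 * Real.pi * (t * (starRingEnd ℂ) w).im = 0 := this.symm.trans hB0
      rcases mul_eq_zero.mp h2 with h3 | h3
      · exact absurd h3 (by positivity : (0:ℝ) < 2 * Real.pi).ne'
      · exact h3
    have htw : t * (starRingEnd ℂ) w = (((t * (starRingEnd ℂ) w).re : ℝ) : ℂ) := by
      apply Complex.ext <;> simp [hBim]
    set r : ℝ := (t * (starRingEnd ℂ) w).re with hr
    have hwns : (Complex.normSq w : ℝ) ≠ 0 := by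
      exact_mod_cast (Complex.normSq_pos.2 hw).ne'
    have htcw : t = ((r / Complex.normSq w : ℝ) : ℂ) * w := by
      have h1 : t * ((starRingEnd ℂ) w * w) = (r : ℂ) * w := by
        rw [← mul_assoc, htw]
      rw [mul_comm ((starRingEnd ℂ) w) w, Complex.mul_conj] at h1
      push_cast
      rw [div_mul_eq_mul_div, eq_div_iff (by exact_mod_cast hwns : (Complex.normSq w : ℂ) ≠ 0)]
      linear_combination h1
    set c : ℝ := r / Complex.normSq w with hc
    rcases lt_trichotomy c 0 with hc0 | hc0 | hc0
    · refine ⟨0, ?_⟩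
      rw [htcw]
      exact neg_ray_mem hw hvw him hc0 0
    · exact absurd (by rw [htcw, hc0]; simp) ht
    · exact absurd ⟨c, hc0, htcw⟩ hray
  · obtain ⟨n, hn⟩ := exists_int_gt ((-A) / B)
    refine ⟨n, (mem_Hplane_iff hvw).2 ⟨ht, ?_⟩⟩
    rw [re_mul_conj_uu_linear, ← hA, ← hB]
    have h4 := (div_lt_iff₀ hB0).mp hn
    linarith

lemma mem_Hplane_of_cos (hvw : ∀ n : ℤ, v + (n : ℂ) * w ≠ 0) {n : ℤ} {βn : ℝ}
    (hn : uu v w n = ((‖uu v w n‖ : ℝ) : ℂ) * Complex.exp (Complex.I * (βn : ℂ)))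
    {ρ θ : ℝ} (hρ : 0 < ρ) (hcos : 0 < Real.cos (θ - βn)) :
    (ρ : ℂ) * Complex.exp (Complex.I * (θ : ℂ)) ∈ Hplane v w n := by
  rw [mem_Hplane_iff hvw]
  have habs : 0 < ‖uu v w n‖ := norm_pos_iff.mpr (uu_ne hvw n)
  set R := ‖uu v w n‖ with hR
  constructor
  · exact mul_ne_zero (by exact_mod_cast hρ.ne') (Complex.exp_ne_zero _)
  · have hconj : (starRingEnd ℂ) (Complex.exp (Complex.I * (βn : ℂ)))
        = Complex.exp (-(Complex.I * (βn : ℂ))) := by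
      rw [← Complex.exp_conj]
      congr 1
      simp
    have hmain : ((ρ : ℂ) * Complex.exp (Complex.I * (θ : ℂ))) * (starRingEnd ℂ) (uu v w n)
        = (((ρ * R : ℝ)) : ℂ)
            * Complex.exp (((θ - βn : ℝ) : ℂ) * Complex.I) := by
      rw [hn, map_mul, hconj, Complex.conj_ofReal]
      rw [show Complex.I * (θ:ℂ) = (θ:ℂ) * Complex.I from mul_comm _ _]
      rw [show (((θ - βn : ℝ)) : ℂ) * Complex.I = (θ:ℂ) * Complex.I + -(Complex.I * (βn:ℂ)) by
        push_cast; ring]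
      rw [Complex.exp_add]
      push_cast
      ring
    rw [hmain, Complex.re_ofReal_mul, Complex.exp_ofReal_mul_I_re]
    exact mul_pos (mul_pos hρ habs) hcos

/-- Elements of `-i·Σ(0)` lie in `ℋ(0)`, their negatives lie in `ℋ(-1)`, and they are
in the upper half plane w.r.t. `w`. -/
lemma negISigma0_props (hw : w ≠ 0) (hvw : ∀ n : ℤ, v + (n : ℂ) * w ≠ 0)
    (him : 0 < (v / w).im) {t : ℂ} (ht : t ∈ negISigma0 v w) :
    t ∈ Hplane v w 0 ∧ -t ∈ Hplane v w (-1) ∧ 0 < (t * (starRingEnd ℂ) w).im := by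
  obtain ⟨u, ⟨a, b, ha, hb, rfl⟩, rfl⟩ := ht
  have hpi := Real.pi_pos
  have hX := im_v_conj_w_pos hw him
  set X := (v * (starRingEnd ℂ) w).im with hXdef
  have hXv : X = v.im * w.re - v.re * w.im := by
    rw [hXdef]; simp [Complex.mul_im, Complex.conj_re, Complex.conj_im]; ring
  constructor
  · rw [mem_Hplane_iff hvw]
    have hre : ((-Complex.I * ((a : ℂ) * (2 * (Real.pi : ℂ) * Complex.I * (v - w)) +
        (b : ℂ) * (2 * (Real.pi : ℂ) * Complex.I * v))) * (starRingEnd ℂ) (uu v w 0)).re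
        = 4 * Real.pi ^ 2 * a * X := by
      rw [hXv]
      unfold uu
      simp only [Complex.mul_re, Complex.mul_im, Complex.add_re, Complex.add_im, Complex.sub_re,
        Complex.sub_im, Complex.neg_re, Complex.neg_im, Complex.conj_re, Complex.conj_im,
        Complex.I_re, Complex.I_im, Complex.ofReal_re, Complex.ofReal_im, Complex.intCast_re,
        Complex.intCast_im, Complex.re_ofNat, Complex.im_ofNat]
      push_cast
      ring
    refine ⟨?_, ?_⟩
    · intro h0
      rw [h0] at hre
      simp only [Complex.zero_re, zero_mul] at hre
      nlinarith [pow_pos hpi 2, mul_pos ha hX]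
    · rw [hre]; nlinarith [pow_pos hpi 2, mul_pos ha hX]
  constructor
  · rw [mem_Hplane_iff hvw]
    have hre : ((-(-Complex.I * ((a : ℂ) * (2 * (Real.pi : ℂ) * Complex.I * (v - w)) +
        (b : ℂ) * (2 * (Real.pi : ℂ) * Complex.I * v)))) * (starRingEnd ℂ) (uu v w (-1))).re
        = 4 * Real.pi ^ 2 * b * X := by
      rw [hXv]
      unfold uu
      simp only [Complex.mul_re, Complex.mul_im, Complex.add_re, Complex.add_im, Complex.sub_re,
        Complex.sub_im, Complex.neg_re, Complex.neg_im, Complex.conj_re, Complex.conj_im,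
        Complex.I_re, Complex.I_im, Complex.ofReal_re, Complex.ofReal_im, Complex.intCast_re,
        Complex.intCast_im, Complex.re_ofNat, Complex.im_ofNat]
      push_cast
      ring
    refine ⟨?_, ?_⟩
    · intro h0
      rw [h0] at hre
      simp only [Complex.zero_re, zero_mul] at hre
      nlinarith [pow_pos hpi 2, mul_pos hb hX]
    · rw [hre]; nlinarith [pow_pos hpi 2, mul_pos hb hX]
  · have him' : ((-Complex.I * ((a : ℂ) * (2 * (Real.pi : ℂ) * Complex.I * (v - w)) +
        (b : ℂ) * (2 * (Real.pi : ℂ) * Complex.I * v))) * (starRingEnd ℂ) w).im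
        = 2 * Real.pi * (a + b) * X := by
      rw [hXv]
      simp only [Complex.mul_re, Complex.mul_im, Complex.add_re, Complex.add_im, Complex.sub_re,
        Complex.sub_im, Complex.neg_re, Complex.neg_im, Complex.conj_re, Complex.conj_im,
        Complex.I_re, Complex.I_im, Complex.ofReal_re, Complex.ofReal_im,
        Complex.re_ofNat, Complex.im_ofNat]
      push_cast
      ring
    rw [him']
    nlinarith [mul_pos (add_pos ha hb) hX]

lemma div_im_neg (hw : w ≠ 0) (hvw : ∀ n : ℤ, v + (n : ℂ) * w ≠ 0) (him : 0 < (v / w).im) :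
    (v / (v - w)).im < 0 := by
  have hvw1 : v - w ≠ 0 := by
    have := hvw (-1); push_cast at this
    intro h; apply this; rw [← h]; ring
  have hns : 0 < Complex.normSq (v - w) := Complex.normSq_pos.2 hvw1
  have hX := im_v_conj_w_pos hw him
  have hXv : (v * (starRingEnd ℂ) w).im = v.im * w.re - v.re * w.im := by
    simp [Complex.mul_im, Complex.conj_re, Complex.conj_im]; ring
  have heq : (v / (v - w)).im = -((v * (starRingEnd ℂ) w).im) / Complex.normSq (v - w) := by
    rw [Complex.div_im, Complex.sub_re, Complex.sub_im, hXv]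
    ring
  rw [heq]
  exact div_neg_of_neg_of_pos (by linarith) hns

noncomputable def alph (v w : ℂ) : ℝ := -Complex.arg (v / (v - w))

lemma alph_mem (hw : w ≠ 0) (hvw : ∀ n : ℤ, v + (n : ℂ) * w ≠ 0) (him : 0 < (v / w).im) :
    0 < alph v w ∧ alph v w < Real.pi := by
  have h1 : Complex.arg (v / (v - w)) < 0 :=
    Complex.arg_neg_iff.2 (div_im_neg hw hvw him)
  have h2 := Complex.neg_pi_lt_arg (v / (v - w))
  unfold alph
  constructor <;> linarith

lemma uu_neg_one_polar :
    uu v w (-1) = ((‖uu v w (-1)‖ : ℝ) : ℂ)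
      * Complex.exp (Complex.I * (Complex.arg (uu v w (-1)) : ℂ)) := by
  rw [mul_comm Complex.I]
  exact (Complex.norm_mul_exp_arg_mul_I _).symm

lemma uu_prod (hvw : ∀ n : ℤ, v + (n : ℂ) * w ≠ 0) :
    uu v w 0 = uu v w (-1) * (v / (v - w)) := by
  have hvw1 : v - w ≠ 0 := by
    have := hvw (-1); push_cast at this
    intro h; apply this; rw [← h]; ring
  unfold uu
  push_cast
  field_simp
  ring

lemma uu_zero_polar (hvw : ∀ n : ℤ, v + (n : ℂ) * w ≠ 0) :
    uu v w 0 = ((‖uu v w 0‖ : ℝ) : ℂ)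
      * Complex.exp (Complex.I * ((Complex.arg (uu v w (-1)) - alph v w : ℝ) : ℂ)) := by
  have hprod := uu_prod (v := v) (w := w) hvw
  have harg : ((Complex.arg (uu v w (-1)) : ℂ)) * Complex.I
        + ((Complex.arg (v / (v - w)) : ℂ)) * Complex.I
      = Complex.I * ((Complex.arg (uu v w (-1)) - alph v w : ℝ) : ℂ) := by
    unfold alph; push_cast; ring
  calc uu v w 0 = uu v w (-1) * (v / (v - w)) := hprod
    _ = (((‖uu v w (-1)‖ : ℝ) : ℂ)
          * Complex.exp ((Complex.arg (uu v w (-1)) : ℂ) * Complex.I))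
        * (((‖v / (v - w)‖ : ℝ) : ℂ)
          * Complex.exp ((Complex.arg (v / (v - w)) : ℂ) * Complex.I)) := by
        rw [Complex.norm_mul_exp_arg_mul_I, Complex.norm_mul_exp_arg_mul_I]
    _ = ((‖uu v w (-1)‖ * ‖v / (v - w)‖ : ℝ) : ℂ)
        * Complex.exp (Complex.I * ((Complex.arg (uu v w (-1)) - alph v w : ℝ) : ℂ)) := by
        rw [← harg, Complex.exp_add]
        push_cast
        ring
    _ = _ := by
        rw [← norm_mul, ← hprod]

noncomputable def th1 (v w : ℂ) : ℝ :=
  Complex.arg (uu v w (-1)) - Real.pi / 2 - 3 * alph v w / 4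

noncomputable def th2 (v w : ℂ) : ℝ :=
  Complex.arg (uu v w (-1)) + Real.pi / 2 - alph v w / 4

def Tsec (v w : ℂ) : Set ℂ :=
  {z : ℂ | ∃ ρ θ : ℝ, 0 < ρ ∧ th1 v w ≤ θ ∧ θ ≤ th2 v w ∧
    z = (ρ : ℂ) * Complex.exp (Complex.I * (θ : ℂ))}

lemma Tsec_sectorShaped (hw : w ≠ 0) (hvw : ∀ n : ℤ, v + (n : ℂ) * w ≠ 0)
    (him : 0 < (v / w).im) : SectorShaped (Tsec v w) := by
  obtain ⟨hα, hαπ⟩ := alph_mem hw hvw him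
  have hpi := Real.pi_pos
  exact ⟨th1 v w, th2 v w, by unfold th1 th2; linarith, rfl⟩

lemma Tsec_subset (hw : w ≠ 0) (hvw : ∀ n : ℤ, v + (n : ℂ) * w ≠ 0)
    (him : 0 < (v / w).im) : Tsec v w ⊆ Vreg v w 0 := by
  rintro z ⟨ρ, θ, hρ, h1, h2, rfl⟩
  obtain ⟨hα, hαπ⟩ := alph_mem hw hvw him
  have hpi := Real.pi_pos
  unfold th1 at h1
  unfold th2 at h2
  set β := Complex.arg (uu v w (-1)) with hβ
  rcases lt_or_ge (-(Real.pi / 2)) (θ - β) with hcase | hcase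
  · left
    have h01 : (0:ℤ) - 1 = -1 := by norm_num
    rw [h01]
    refine mem_Hplane_of_cos hvw uu_neg_one_polar hρ ?_
    apply Real.cos_pos_of_mem_Ioo
    constructor
    · exact hcase
    · linarith
  · right
    refine mem_Hplane_of_cos hvw (uu_zero_polar hvw) hρ ?_
    apply Real.cos_pos_of_mem_Ioo
    constructor
    · show -(Real.pi / 2) < θ - (β - alph v w)
      linarith
    · show θ - (β - alph v w) < Real.pi / 2
      linarith

lemma Tsec_cover (hw : w ≠ 0) (hvw : ∀ n : ℤ, v + (n : ℂ) * w ≠ 0)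
    (him : 0 < (v / w).im) {z : ℂ} (hz : z ≠ 0) : z ∈ Tsec v w ∨ -z ∈ Tsec v w := by
  obtain ⟨hα, hαπ⟩ := alph_mem hw hvw him
  have hpi := Real.pi_pos
  set β := Complex.arg (uu v w (-1))
  set θ' := Complex.arg z with hθ'
  set k : ℤ := ⌈(th1 v w - θ') / (2 * Real.pi)⌉ with hk
  set θ := θ' + 2 * Real.pi * k with hθ
  have h2π : (0:ℝ) < 2 * Real.pi := by linarith
  have hk1 : (th1 v w - θ') / (2 * Real.pi) ≤ (k : ℝ) := Int.le_ceil _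
  have hk2 : (k : ℝ) < (th1 v w - θ') / (2 * Real.pi) + 1 := Int.ceil_lt_add_one _
  have hθlb : th1 v w ≤ θ := by
    have := (div_le_iff₀ h2π).mp hk1
    rw [hθ]; linarith
  have hθub : θ < th1 v w + 2 * Real.pi := by
    have h := mul_lt_mul_of_pos_right hk2 h2π
    have he : ((th1 v w - θ') / (2 * Real.pi) + 1) * (2 * Real.pi) = th1 v w - θ' + 2 * Real.pi := by
      field_simp
    rw [he] at h
    rw [hθ]; nlinarith
  have habsz : 0 < ‖z‖ := norm_pos_iff.mpr hz
  have hzpolar : z = ((‖z‖ : ℝ) : ℂ) * Complex.exp (Complex.I * (θ : ℂ)) := by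
    have h1 : Complex.exp (Complex.I * (θ : ℂ)) = Complex.exp (Complex.I * (θ' : ℂ)) := by
      rw [hθ]
      push_cast
      rw [show Complex.I * ((θ' : ℂ) + 2 * (Real.pi : ℂ) * (k : ℂ))
          = Complex.I * (θ' : ℂ) + (k : ℂ) * (2 * (Real.pi : ℂ) * Complex.I) by ring]
      rw [Complex.exp_add, Complex.exp_int_mul_two_pi_mul_I, mul_one]
    rw [h1, mul_comm Complex.I]
    exact (Complex.norm_mul_exp_arg_mul_I z).symm
  rcases le_or_gt θ (th2 v w) with hcase | hcase
  · exact Or.inl ⟨‖z‖, θ, habsz, hθlb, hcase, hzpolar⟩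
  · right
    have hneg : -z = ((‖z‖ : ℝ) : ℂ)
        * Complex.exp (Complex.I * ((θ - Real.pi : ℝ) : ℂ)) := by
      have hsplit : Complex.exp (Complex.I * (θ : ℂ))
          = -Complex.exp (Complex.I * ((θ - Real.pi : ℝ) : ℂ)) := by
        rw [show Complex.I * (θ : ℂ)
            = Complex.I * ((θ - Real.pi : ℝ) : ℂ) + (Real.pi : ℂ) * Complex.I by push_cast; ring]
        rw [Complex.exp_add, Complex.exp_pi_mul_I]
        ring
      conv_lhs => rw [hzpolar]
      rw [hsplit]
      ring
    refine ⟨‖z‖, θ - Real.pi, habsz, ?_, ?_, hneg⟩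
    · unfold th1 th2 at *
      linarith
    · unfold th1 th2 at *
      linarith

end Geometry

/-! ## Gluing the ratio function -/

section Glue

variable {v w : ℂ} {φ : ℤ → ℂ → ℂ}

lemma Hplane_subset_Vreg {n : ℤ} : Hplane v w n ⊆ Vreg v w n := Set.subset_union_right

lemma Hplane_subset_Vreg_succ {n : ℤ} : Hplane v w n ⊆ Vreg v w (n + 1) := by
  intro t ht
  left
  rwa [show n + 1 - 1 = n by ring]

lemma Hplane_isOpen (hvw : ∀ n : ℤ, v + (n : ℂ) * w ≠ 0) (n : ℤ) : IsOpen (Hplane v w n) := by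
  have : Hplane v w n = {t : ℂ | t ≠ 0} ∩
      (fun t : ℂ => (t / (2 * (Real.pi : ℂ) * Complex.I * (v + (n : ℂ) * w))).re) ⁻¹'
        Set.Ioi 0 := by
    ext t; simp [Hplane, Set.mem_setOf_eq, and_comm]
  rw [this]
  exact (isOpen_ne).inter ((isOpen_Ioi).preimage
    (Complex.continuous_re.comp (continuous_id.div_const _)))

lemma phi_chain (hvw : ∀ n : ℤ, v + (n : ℂ) * w ≠ 0)
    (hjump : ∀ n : ℤ, ∀ t ∈ Hplane v w n, φ (n + 1) t = φ n t) {t : ℂ} :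
    ∀ (k : ℕ) (a : ℤ), (∀ i : ℕ, i < k → t ∈ Hplane v w (a + i)) → φ a t = φ (a + k) t := by
  intro k
  induction k with
  | zero => intro a _; simp
  | succ k ih =>
    intro a h
    have h1 : φ a t = φ (a + k) t := ih a (fun i hi => h i (hi.trans (Nat.lt_succ_self k)))
    have h2 : t ∈ Hplane v w (a + k) := h k (Nat.lt_succ_self k)
    have h3 := (hjump (a + k) t h2).symm
    rw [h1, h3]
    congr 1
    omega

lemma phi_compat (hvw : ∀ n : ℤ, v + (n : ℂ) * w ≠ 0)
    (hjump : ∀ n : ℤ, ∀ t ∈ Hplane v w n, φ (n + 1) t = φ n t) {t : ℂ} {n m : ℤ}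
    (hn : t ∈ Vreg v w n) (hm : t ∈ Vreg v w m) : φ n t = φ m t := by
  -- reduce to the case n ≤ m
  have key : ∀ n m : ℤ, n ≤ m → t ∈ Vreg v w n → t ∈ Vreg v w m → φ n t = φ m t := by
    intro n m hnm hn hm
    obtain ⟨a, ha, haub⟩ : ∃ a, t ∈ Hplane v w a ∧ (a = n - 1 ∨ a = n) := by
      rcases hn with h | h
      exacts [⟨n - 1, h, Or.inl rfl⟩, ⟨n, h, Or.inr rfl⟩]
    obtain ⟨b, hb, hbub⟩ : ∃ b, t ∈ Hplane v w b ∧ (b = m - 1 ∨ b = m) := by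
      rcases hm with h | h
      exacts [⟨m - 1, h, Or.inl rfl⟩, ⟨m, h, Or.inr rfl⟩]
    have hmem : ∀ c : ℤ, min a b ≤ c → c ≤ max a b → t ∈ Hplane v w c := by
      intro c h1 h2
      rcases le_total a b with hab | hab
      · exact Hplane_convex hvw (by omega) (by omega) ha hb
      · exact Hplane_convex hvw (by omega) (by omega) hb ha
    have hk : ∀ i : ℕ, i < (m - n).toNat → t ∈ Hplane v w (n + i) := by
      intro i hi
      apply hmem <;> omega
    have hchain := phi_chain hvw hjump (m - n).toNat n hk
    rwa [show n + ((m - n).toNat : ℤ) = m by omega] at hchain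
  rcases le_total n m with h | h
  · exact key n m h hn hm
  · exact (key m n h hm hn).symm

end Glue

section FGlue

variable {v w : ℂ} {φ : ℤ → ℂ → ℂ}

/-- The union of all half-planes. -/
def Uset (v w : ℂ) : Set ℂ := {t : ℂ | ∃ n : ℤ, t ∈ Hplane v w n}

open Classical in
/-- The glued ratio function. -/
noncomputable def Fglue (v w : ℂ) (φ : ℤ → ℂ → ℂ) (t : ℂ) : ℂ :=
  if h : ∃ n : ℤ, t ∈ Hplane v w n then φ (Classical.choose h) t else 1

lemma Uset_isOpen (hvw : ∀ n : ℤ, v + (n : ℂ) * w ≠ 0) : IsOpen (Uset v w) := by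
  have h : Uset v w = ⋃ n : ℤ, Hplane v w n := by ext t; simp [Uset]
  rw [h]
  exact isOpen_iUnion (fun n => Hplane_isOpen hvw n)

lemma Vreg_subset_Uset {n : ℤ} : Vreg v w n ⊆ Uset v w := by
  rintro t (h | h)
  exacts [⟨n - 1, h⟩, ⟨n, h⟩]

lemma Fglue_eq (hvw : ∀ n : ℤ, v + (n : ℂ) * w ≠ 0)
    (hjump : ∀ n : ℤ, ∀ t ∈ Hplane v w n, φ (n + 1) t = φ n t) {t : ℂ} {n : ℤ}
    (ht : t ∈ Vreg v w n) : Fglue v w φ t = φ n t := by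
  have h : ∃ k : ℤ, t ∈ Hplane v w k := Vreg_subset_Uset ht
  rw [Fglue, dif_pos h]
  exact phi_compat hvw hjump (Hplane_subset_Vreg (Classical.choose_spec h)) ht

lemma Fglue_diffAt (hvw : ∀ n : ℤ, v + (n : ℂ) * w ≠ 0)
    (hjump : ∀ n : ℤ, ∀ t ∈ Hplane v w n, φ (n + 1) t = φ n t)
    (hdiff : ∀ n, DifferentiableOn ℂ (φ n) (Vreg v w n)) {t : ℂ} (ht : t ∈ Uset v w) :
    DifferentiableAt ℂ (Fglue v w φ) t := by
  obtain ⟨n, hn⟩ := ht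
  have hop := Hplane_isOpen hvw n
  have h1 : DifferentiableAt ℂ (φ n) t :=
    ((hdiff n).mono Hplane_subset_Vreg).differentiableAt (hop.mem_nhds hn)
  apply h1.congr_of_eventuallyEq
  filter_upwards [hop.mem_nhds hn] with s hs
  exact Fglue_eq hvw hjump (Hplane_subset_Vreg hs)

lemma Fglue_ne (hvw : ∀ n : ℤ, v + (n : ℂ) * w ≠ 0)
    (hjump : ∀ n : ℤ, ∀ t ∈ Hplane v w n, φ (n + 1) t = φ n t)
    (hne : ∀ n, ∀ t ∈ Vreg v w n, φ n t ≠ 0) {t : ℂ} (ht : t ∈ Uset v w) :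
    Fglue v w φ t ≠ 0 := by
  obtain ⟨n, hn⟩ := ht
  rw [Fglue_eq hvw hjump (Hplane_subset_Vreg hn)]
  exact hne n t (Hplane_subset_Vreg hn)

/-- The open half plane above the line `ℝ·w`. -/
def Pupper (w : ℂ) : Set ℂ := {t : ℂ | 0 < (t * (starRingEnd ℂ) w).im}

lemma Pupper_isOpen : IsOpen (Pupper w) :=
  isOpen_lt continuous_const (Complex.continuous_im.comp (continuous_mul_right _))

lemma Pupper_convex : Convex ℝ (Pupper w) := by
  apply convex_halfSpace_gt
  constructor
  · intro a b; simp [add_mul]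
  · intro r a
    simp only [smul_mul_assoc, Complex.smul_im, smul_eq_mul]

lemma mem_U_of_im_ne (hw : w ≠ 0) (hvw : ∀ n : ℤ, v + (n : ℂ) * w ≠ 0)
    (him : 0 < (v / w).im) {t : ℂ} (ht : (t * (starRingEnd ℂ) w).im ≠ 0) : t ∈ Uset v w := by
  apply exists_mem_Hplane hw hvw him
  · intro h0; apply ht; rw [h0]; simp
  · rintro ⟨c, _, rfl⟩
    apply ht
    rw [mul_assoc, Complex.mul_conj]
    simp

lemma negISigma0_smul {c : ℝ} (hc : 0 < c) {t : ℂ} (ht : t ∈ negISigma0 v w) :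
    (c : ℂ) * t ∈ negISigma0 v w := by
  obtain ⟨u, ⟨a, b, ha, hb, rfl⟩, rfl⟩ := ht
  refine ⟨(c : ℂ) * ((a : ℂ) * (2 * (Real.pi : ℂ) * Complex.I * (v - w)) +
      (b : ℂ) * (2 * (Real.pi : ℂ) * Complex.I * v)), ⟨c * a, c * b, mul_pos hc ha,
      mul_pos hc hb, by push_cast; ring⟩, by ring⟩

lemma refl_identity (hw : w ≠ 0) (hvw : ∀ n : ℤ, v + (n : ℂ) * w ≠ 0)
    (him : 0 < (v / w).im)
    (hjump : ∀ n : ℤ, ∀ t ∈ Hplane v w n, φ (n + 1) t = φ n t)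
    (hdiff : ∀ n, DifferentiableOn ℂ (φ n) (Vreg v w n))
    (hrefl : ∀ t ∈ negISigma0 v w, φ 0 t * φ 0 (-t) = 1) :
    ∀ t : ℂ, (t * (starRingEnd ℂ) w).im ≠ 0 →
      Fglue v w φ t * Fglue v w φ (-t) = 1 := by
  have hrefl' : ∀ t ∈ negISigma0 v w, Fglue v w φ t * Fglue v w φ (-t) = 1 := by
    intro t ht
    obtain ⟨h0, hneg, _⟩ := negISigma0_props hw hvw him ht
    have hmem : t ∈ Vreg v w 0 := Or.inr h0
    have hmemneg : -t ∈ Vreg v w 0 := Or.inl (by rwa [show (0:ℤ) - 1 = -1 by norm_num])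
    rw [Fglue_eq hvw hjump hmem, Fglue_eq hvw hjump hmemneg]
    exact hrefl t ht
  have hup : ∀ t ∈ Pupper w, Fglue v w φ t * Fglue v w φ (-t) = 1 := by
    set g : ℂ → ℂ := fun t => Fglue v w φ t * Fglue v w φ (-t) with hg
    have hgan : AnalyticOnNhd ℂ g (Pupper w) := by
      apply DifferentiableOn.analyticOnNhd ?_ Pupper_isOpen
      intro t ht
      have ht' : 0 < (t * (starRingEnd ℂ) w).im := ht
      apply DifferentiableAt.differentiableWithinAt
      have h1 : DifferentiableAt ℂ (Fglue v w φ) t :=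
        Fglue_diffAt hvw hjump hdiff (mem_U_of_im_ne hw hvw him ht'.ne')
      have h2 : DifferentiableAt ℂ (fun s : ℂ => Fglue v w φ (-s)) t := by
        have hnt : -t ∈ Uset v w := by
          apply mem_U_of_im_ne hw hvw him
          have : ((-t) * (starRingEnd ℂ) w).im = -((t * (starRingEnd ℂ) w).im) := by
            simp [neg_mul]
          rw [this]
          exact neg_ne_zero.mpr ht'.ne'
        exact (Fglue_diffAt hvw hjump hdiff hnt).comp t differentiable_neg.differentiableAt
      exact h1.mul h2
    have hconst : AnalyticOnNhd ℂ (fun _ : ℂ => (1:ℂ)) (Pupper w) := analyticOnNhd_const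
    have hpre : IsPreconnected (Pupper w) := Pupper_convex.isPreconnected
    -- base point in -i·Σ(0)
    set t₀ : ℂ := -Complex.I * ((1 : ℂ) * (2 * (Real.pi : ℂ) * Complex.I * (v - w)) +
        (1 : ℂ) * (2 * (Real.pi : ℂ) * Complex.I * v)) with ht₀def
    have ht₀mem : t₀ ∈ negISigma0 v w := by
      refine ⟨_, ⟨1, 1, one_pos, one_pos, ?_⟩, rfl⟩
      push_cast
      ring
    obtain ⟨ht₀H, _, ht₀P⟩ := negISigma0_props hw hvw him ht₀mem
    have ht₀ne : t₀ ≠ 0 := ht₀H.1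
    have hfreq : ∃ᶠ z in nhdsWithin t₀ {t₀}ᶜ, g z = (fun _ : ℂ => (1:ℂ)) z := by
      set u : ℕ → ℂ := fun j => ((1 + 1 / (j + 1) : ℝ) : ℂ) * t₀ with hu
      have hcj : ∀ j : ℕ, (0:ℝ) < 1 + 1 / (j + 1) := by
        intro j; positivity
      have humem : ∀ j, u j ∈ negISigma0 v w := fun j => negISigma0_smul (hcj j) ht₀mem
      have hune : ∀ j, u j ≠ t₀ := by
        intro j h
        have h' : ((1 + 1 / (j + 1) : ℝ) : ℂ) * t₀ = t₀ := h
        have h1 : (((1 + 1 / (j + 1) : ℝ) : ℂ) - 1) * t₀ = 0 := by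
          rw [sub_mul, one_mul, h', sub_self]
        rcases mul_eq_zero.mp h1 with h2 | h2
        · rw [sub_eq_zero] at h2
          have : (1 + 1 / (j + 1) : ℝ) = 1 := by exact_mod_cast h2
          have : (1 / (j + 1) : ℝ) = 0 := by linarith
          have hj : (0:ℝ) < 1 / (j + 1) := by positivity
          linarith
        · exact ht₀ne h2
      have hulim : Filter.Tendsto u Filter.atTop (nhds t₀) := by
        have h1 : Filter.Tendsto (fun j : ℕ => ((1 + 1 / (j + 1) : ℝ) : ℂ))
            Filter.atTop (nhds 1) := by
          have h2 : Filter.Tendsto (fun j : ℕ => (1 + 1 / (j + 1) : ℝ))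
              Filter.atTop (nhds 1) := by
            have := tendsto_one_div_add_atTop_nhds_zero_nat (𝕜 := ℝ)
            have h3 := this.const_add 1
            simpa using h3
          have h4 := (Complex.continuous_ofReal.tendsto 1).comp h2
          simpa [Function.comp_def, one_div] using h4
        have h4 := h1.mul_const t₀
        rw [hu]
        simpa [one_div] using h4
      have hulim' : Filter.Tendsto u Filter.atTop (nhdsWithin t₀ {t₀}ᶜ) := by
        rw [tendsto_nhdsWithin_iff]
        exact ⟨hulim, Filter.Eventually.of_forall (fun j => hune j)⟩
      apply hulim'.frequently
      apply Filter.Frequently.of_forall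
      intro j
      exact hrefl' (u j) (humem j)
    exact fun t ht => hgan.eqOn_of_preconnected_of_frequently_eq hconst hpre ht₀P hfreq ht
  intro t ht
  rcases lt_or_gt_of_ne ht with hlt | hgt
  · have hmem : -t ∈ Pupper w := by
      show 0 < ((-t) * (starRingEnd ℂ) w).im
      rw [neg_mul]
      simpa using hlt
    have := hup (-t) hmem
    rw [neg_neg] at this
    linear_combination this - Fglue v w φ t * Fglue v w φ (-t) + Fglue v w φ (-t) * Fglue v w φ t
  · exact hup t hgt

end FGlue

section GFun

variable {v w : ℂ} {φ : ℤ → ℂ → ℂ}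

open Classical in
/-- The reflected extension of the glued ratio to all of `ℂ`. -/
noncomputable def Gfun (v w : ℂ) (φ : ℤ → ℂ → ℂ) (t : ℂ) : ℂ :=
  if t = 0 then 1 else if t ∈ Uset v w then Fglue v w φ t else (Fglue v w φ (-t))⁻¹

lemma Uset_ne_zero {t : ℂ} (ht : t ∈ Uset v w) : t ≠ 0 := by
  obtain ⟨n, hn, _⟩ := ht
  exact hn

lemma Gfun_zero : Gfun v w φ 0 = 1 := by rw [Gfun, if_pos rfl]

lemma Gfun_eq_F {t : ℂ} (ht : t ∈ Uset v w) : Gfun v w φ t = Fglue v w φ t := by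
  rw [Gfun, if_neg (Uset_ne_zero ht), if_pos ht]

lemma im_eq_zero_ray (hw : w ≠ 0) {t : ℂ} (ht : t ≠ 0)
    (him0 : (t * (starRingEnd ℂ) w).im = 0) : ∃ c : ℝ, c ≠ 0 ∧ t = (c : ℂ) * w := by
  have htw : t * (starRingEnd ℂ) w = (((t * (starRingEnd ℂ) w).re : ℝ) : ℂ) := by
    apply Complex.ext <;> simp [him0]
  set r : ℝ := (t * (starRingEnd ℂ) w).re with hr
  have hwns : Complex.normSq w ≠ 0 := (Complex.normSq_pos.2 hw).ne'
  have htcw : t = ((r / Complex.normSq w : ℝ) : ℂ) * w := by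
    have h1 : t * ((starRingEnd ℂ) w * w) = (r : ℂ) * w := by
      rw [← mul_assoc, htw]
    rw [mul_comm ((starRingEnd ℂ) w) w, Complex.mul_conj] at h1
    push_cast
    rw [div_mul_eq_mul_div, eq_div_iff (by exact_mod_cast hwns : (Complex.normSq w : ℂ) ≠ 0)]
    linear_combination h1
  refine ⟨r / Complex.normSq w, ?_, htcw⟩
  intro h0
  apply ht
  rw [htcw, h0]
  simp

lemma not_pos_ray_of_mem_U (hw : w ≠ 0) (hvw : ∀ n : ℤ, v + (n : ℂ) * w ≠ 0)
    (him : 0 < (v / w).im) {c : ℝ} (hc : 0 ≤ c) (hmem : (c : ℂ) * w ∈ Uset v w) : False := by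
  obtain ⟨n, hn⟩ := hmem
  exact pos_ray_not_mem hw him hc n hn hvw

lemma Gfun_eq_inv (hw : w ≠ 0) (hvw : ∀ n : ℤ, v + (n : ℂ) * w ≠ 0) (him : 0 < (v / w).im)
    (hjump : ∀ n : ℤ, ∀ t ∈ Hplane v w n, φ (n + 1) t = φ n t)
    (hdiff : ∀ n, DifferentiableOn ℂ (φ n) (Vreg v w n))
    (hrefl : ∀ t ∈ negISigma0 v w, φ 0 t * φ 0 (-t) = 1)
    {t : ℂ} (ht : t ≠ 0) (hnt : -t ∈ Uset v w) :
    Gfun v w φ t = (Fglue v w φ (-t))⁻¹ := by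
  by_cases h2 : t ∈ Uset v w
  · have him0 : (t * (starRingEnd ℂ) w).im ≠ 0 := by
      intro h0
      obtain ⟨c, hc, rfl⟩ := im_eq_zero_ray hw ht h0
      rcases lt_or_gt_of_ne hc with hc0 | hc0
      · apply not_pos_ray_of_mem_U hw hvw him (c := -c) (by linarith) ?_
        have : ((-c : ℝ) : ℂ) * w = -((c : ℂ) * w) := by push_cast; ring
        rwa [this]
      · exact not_pos_ray_of_mem_U hw hvw him hc0.le h2
    have hid := refl_identity hw hvw him hjump hdiff hrefl t him0
    rw [Gfun_eq_F h2]
    exact eq_inv_of_mul_eq_one_left (mul_comm (Fglue v w φ t) (Fglue v w φ (-t)) ▸ hid)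
  · rw [Gfun, if_neg ht, if_neg h2]

/-- The set of directions strictly on the `w` side, used as a neighbourhood of the
positive ray. -/
def Wside (w : ℂ) : Set ℂ := {t : ℂ | 0 < (t * (starRingEnd ℂ) w).re}

lemma Wside_isOpen : IsOpen (Wside w) :=
  isOpen_lt continuous_const (Complex.continuous_re.comp (continuous_mul_right _))

lemma Wside_props (hw : w ≠ 0) (hvw : ∀ n : ℤ, v + (n : ℂ) * w ≠ 0) (him : 0 < (v / w).im)
    {s : ℂ} (hs : s ∈ Wside w) : s ≠ 0 ∧ -s ∈ Uset v w := by
  have hs' : 0 < (s * (starRingEnd ℂ) w).re := hs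
  have hsne : s ≠ 0 := by
    intro h0; rw [h0] at hs'; simp at hs'
  refine ⟨hsne, ?_⟩
  rcases eq_or_ne ((-s * (starRingEnd ℂ) w).im) 0 with h0 | h0
  · -- -s is on the line ℝ·w; it must be on the negative ray
    obtain ⟨c, hc, hcw⟩ := im_eq_zero_ray hw (neg_ne_zero.mpr hsne) h0
    rcases lt_or_gt_of_ne hc with hc0 | hc0
    · rw [hcw]; exact ⟨0, neg_ray_mem hw hvw him hc0 0⟩
    · exfalso
      have : ((-s) * (starRingEnd ℂ) w).re = c * Complex.normSq w := by
        rw [hcw, mul_assoc, Complex.mul_conj]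
        simp
      have h1 : ((-s) * (starRingEnd ℂ) w).re = -((s * (starRingEnd ℂ) w).re) := by
        simp [neg_mul]
      rw [h1] at this
      nlinarith [Complex.normSq_pos.2 hw]
  · exact mem_U_of_im_ne hw hvw him h0

lemma pos_ray_mem_Wside (hw : w ≠ 0) {c : ℝ} (hc : 0 < c) : (c : ℂ) * w ∈ Wside w := by
  show 0 < (((c : ℂ) * w) * (starRingEnd ℂ) w).re
  rw [mul_assoc, Complex.mul_conj]
  simpa using mul_pos hc (Complex.normSq_pos.2 hw)

lemma Gfun_diffAt (hw : w ≠ 0) (hvw : ∀ n : ℤ, v + (n : ℂ) * w ≠ 0) (him : 0 < (v / w).im)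
    (hjump : ∀ n : ℤ, ∀ t ∈ Hplane v w n, φ (n + 1) t = φ n t)
    (hdiff : ∀ n, DifferentiableOn ℂ (φ n) (Vreg v w n))
    (hne : ∀ n, ∀ t ∈ Vreg v w n, φ n t ≠ 0)
    (hrefl : ∀ t ∈ negISigma0 v w, φ 0 t * φ 0 (-t) = 1)
    {t : ℂ} (ht : t ≠ 0) : DifferentiableAt ℂ (Gfun v w φ) t := by
  by_cases hU : t ∈ Uset v w
  · have h1 : DifferentiableAt ℂ (Fglue v w φ) t := Fglue_diffAt hvw hjump hdiff hU
    apply h1.congr_of_eventuallyEq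
    filter_upwards [(Uset_isOpen hvw).mem_nhds hU] with s hs
    exact Gfun_eq_F hs
  · -- t is on the positive ray; use the reflected formula on Wside
    have htray : ∃ c : ℝ, 0 < c ∧ t = (c : ℂ) * w := by
      by_contra hcon
      exact hU (exists_mem_Hplane hw hvw him ht hcon)
    obtain ⟨c, hc, rfl⟩ := htray
    have htW : (c : ℂ) * w ∈ Wside w := pos_ray_mem_Wside hw hc
    have hnt : -((c : ℂ) * w) ∈ Uset v w :=
      (Wside_props hw hvw him htW).2
    have h1 : DifferentiableAt ℂ (fun s : ℂ => (Fglue v w φ (-s))⁻¹) ((c : ℂ) * w) := by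
      have h2 : DifferentiableAt ℂ (fun s : ℂ => Fglue v w φ (-s)) ((c : ℂ) * w) :=
        (Fglue_diffAt hvw hjump hdiff hnt).comp _ differentiable_neg.differentiableAt
      exact h2.inv (Fglue_ne hvw hjump hne hnt)
    apply h1.congr_of_eventuallyEq
    filter_upwards [Wside_isOpen.mem_nhds htW] with s hs
    obtain ⟨hsne, hsnU⟩ := Wside_props hw hvw him hs
    exact Gfun_eq_inv hw hvw him hjump hdiff hrefl hsne hsnU

end GFun

section Master

variable {v w : ℂ} {φ : ℤ → ℂ → ℂ}

theorem ratio_eq_one (hw : w ≠ 0) (hvw : ∀ n : ℤ, v + (n : ℂ) * w ≠ 0)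
    (him : 0 < (v / w).im)
    (hdiff : ∀ n, DifferentiableOn ℂ (φ n) (Vreg v w n))
    (hne : ∀ n, ∀ t ∈ Vreg v w n, φ n t ≠ 0)
    (hjump : ∀ n : ℤ, ∀ t ∈ Hplane v w n, φ (n + 1) t = φ n t)
    (hlim : ∀ S : Set ℂ, SectorShaped S → S ⊆ Vreg v w 0 →
      Filter.Tendsto (φ 0) (nhdsWithin 0 S) (nhds 1))
    (hgrow : ∀ S : Set ℂ, SectorShaped S → S ⊆ Vreg v w 0 →
      ∃ K M : ℝ, ∀ t ∈ S, M < ‖t‖ →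
        ‖t‖ ^ (-K) < ‖φ 0 t‖ ∧ ‖φ 0 t‖ < ‖t‖ ^ K)
    (hrefl : ∀ t ∈ negISigma0 v w, φ 0 t * φ 0 (-t) = 1) :
    ∀ n : ℤ, ∀ t ∈ Vreg v w n, φ n t = 1 := by
  set G := Gfun v w φ with hG
  set T := Tsec v w with hT
  set T' := (fun z : ℂ => -z) ⁻¹' T with hT'
  have hTsec := Tsec_sectorShaped hw hvw him
  have hTsub := Tsec_subset hw hvw him
  have hTU : T ⊆ Uset v w := fun t ht => Vreg_subset_Uset (hTsub ht)
  have hTne : ∀ t ∈ T, t ≠ 0 := fun t ht => Uset_ne_zero (hTU ht)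
  -- evaluation of G on T and T'
  have hGT : ∀ t ∈ T, G t = φ 0 t := by
    intro t ht
    rw [hG, Gfun_eq_F (hTU ht), Fglue_eq hvw hjump (hTsub ht)]
  have hGT' : ∀ t ∈ T', G t = (φ 0 (-t))⁻¹ := by
    intro t ht
    have h1 : -t ∈ T := ht
    have h2 : t ≠ 0 := by
      intro h0; exact hTne _ h1 (by rw [h0]; simp)
    rw [hG, Gfun_eq_inv hw hvw him hjump hdiff hrefl h2 (hTU h1),
      Fglue_eq hvw hjump (hTsub h1)]
  -- limit of G at 0
  have hlim0 : Filter.Tendsto G (nhdsWithin 0 {z : ℂ | z ≠ 0}) (nhds 1) := by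
    have hcov : {z : ℂ | z ≠ 0} ⊆ T ∪ T' := by
      intro z hz
      rcases Tsec_cover hw hvw him hz with h | h
      · exact Or.inl h
      · exact Or.inr h
    have hmono : nhdsWithin (0:ℂ) {z : ℂ | z ≠ 0} ≤
        nhdsWithin 0 T ⊔ nhdsWithin 0 T' := by
      rw [← nhdsWithin_union]
      exact nhdsWithin_mono 0 hcov
    apply Filter.Tendsto.mono_left ?_ hmono
    rw [Filter.tendsto_sup]
    constructor
    · apply Filter.Tendsto.congr' ?_ (hlim T hTsec hTsub)
      filter_upwards [eventually_mem_nhdsWithin] with t ht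
      exact (hGT t ht).symm
    · have hneg : Filter.Tendsto (fun z : ℂ => -z) (nhdsWithin 0 T') (nhdsWithin 0 T) := by
        rw [tendsto_nhdsWithin_iff]
        constructor
        · have h6 : Filter.Tendsto (fun z : ℂ => -z) (nhds (0:ℂ)) (nhds (0:ℂ)) := by
            simpa using (continuous_neg.tendsto (0:ℂ))
          exact h6.mono_left nhdsWithin_le_nhds
        · filter_upwards [eventually_mem_nhdsWithin] with t ht
          exact ht
      have h1 : Filter.Tendsto (fun t : ℂ => (φ 0 (-t))⁻¹) (nhdsWithin 0 T') (nhds 1) := by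
        have h2 := ((hlim T hTsec hTsub).comp hneg).inv₀ one_ne_zero
        simpa using h2
      apply Filter.Tendsto.congr' ?_ h1
      filter_upwards [eventually_mem_nhdsWithin] with t ht
      exact (hGT' t ht).symm
  -- continuity at 0 and entirety
  have hG0 : G 0 = 1 := Gfun_zero
  have hcont0 : ContinuousAt G 0 := by
    rw [ContinuousAt, hG0]
    rw [← nhdsNE_sup_pure (0:ℂ)]
    rw [Filter.tendsto_sup]
    constructor
    · have : ({(0:ℂ)}ᶜ : Set ℂ) = {z : ℂ | z ≠ 0} := by ext z; simp
      rw [this]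
      exact hlim0
    · rw [Filter.tendsto_pure_left]
      intro s hs
      rw [hG0]
      exact mem_of_mem_nhds hs
  have hGdiff : Differentiable ℂ G := by
    intro z
    rcases eq_or_ne z 0 with rfl | hz
    · apply AnalyticAt.differentiableAt
      apply Complex.analyticAt_of_differentiable_on_punctured_nhds_of_continuousAt ?_ hcont0
      filter_upwards [eventually_mem_nhdsWithin] with t ht
      exact Gfun_diffAt hw hvw him hjump hdiff hne hrefl ht
    · exact Gfun_diffAt hw hvw him hjump hdiff hne hrefl hz
  -- global reflection identity for G
  have hreflG : ∀ z : ℂ, G z * G (-z) = 1 := by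
    have hup : ∀ t ∈ Pupper w, G t * G (-t) = 1 := by
      intro t ht
      have ht' : 0 < (t * (starRingEnd ℂ) w).im := ht
      have htU : t ∈ Uset v w := mem_U_of_im_ne hw hvw him ht'.ne'
      have hntU : -t ∈ Uset v w := by
        apply mem_U_of_im_ne hw hvw him
        have : ((-t) * (starRingEnd ℂ) w).im = -((t * (starRingEnd ℂ) w).im) := by
          simp [neg_mul]
        rw [this]
        exact neg_ne_zero.mpr ht'.ne'
      rw [hG, Gfun_eq_F htU, Gfun_eq_F hntU]
      exact refl_identity hw hvw him hjump hdiff hrefl t ht'.ne'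
    -- extend to all of ℂ by the identity principle
    have hH : Differentiable ℂ (fun z : ℂ => G z * G (-z)) :=
      hGdiff.mul (hGdiff.comp differentiable_neg)
    have hHan : AnalyticOnNhd ℂ (fun z : ℂ => G z * G (-z)) Set.univ :=
      fun z _ => hH.analyticAt z
    have hconst : AnalyticOnNhd ℂ (fun _ : ℂ => (1:ℂ)) Set.univ :=
      fun z _ => analyticAt_const
    -- a point of Pupper
    have hPne : (Complex.I * w) ∈ Pupper w := by
      show 0 < ((Complex.I * w) * (starRingEnd ℂ) w).im
      rw [mul_assoc, Complex.mul_conj]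
      simpa using Complex.normSq_pos.2 hw
    have heq := AnalyticOnNhd.eqOn_of_preconnected_of_eventuallyEq hHan hconst
      isPreconnected_univ (Set.mem_univ (Complex.I * w)) ?_
    · intro z
      exact heq (Set.mem_univ z)
    · filter_upwards [Pupper_isOpen.mem_nhds hPne] with s hs
      exact hup s hs
  -- polynomial growth of G
  obtain ⟨K, M, hKM⟩ := hgrow T hTsec hTsub
  have hGbig : ∃ C : ℝ, ∃ KK : ℕ, ∀ z : ℂ, ‖G z‖ ≤ C * (1 + ‖z‖) ^ KK := by
    set M' : ℝ := max M 1 with hM'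
    set KK : ℕ := ⌈|K|⌉₊ with hKK
    have hbig : ∀ z : ℂ, M' < ‖z‖ → ‖G z‖ ≤ ‖z‖ ^ KK := by
      intro z hz
      have hz1 : (1:ℝ) < ‖z‖ := lt_of_le_of_lt (le_max_right M 1) hz
      have hzM : M < ‖z‖ := lt_of_le_of_lt (le_max_left M 1) hz
      have hzne : z ≠ 0 := by
        intro h; rw [h] at hz1; simp at hz1; linarith
      have hKle : K ≤ (KK : ℝ) := le_trans (le_abs_self K) (Nat.le_ceil _)
      have hrpow : ‖z‖ ^ K ≤ (‖z‖ : ℝ) ^ (KK : ℕ) := by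
        rw [← Real.rpow_natCast (‖z‖) KK]
        exact Real.rpow_le_rpow_of_exponent_le hz1.le hKle
      rcases Tsec_cover hw hvw him hzne with hmem | hmem
      · have hb := (hKM z hmem hzM).2
        rw [hGT z hmem]
        exact le_trans hb.le hrpow
      · have hmem' : z ∈ T' := hmem
        have habs : ‖-z‖ = ‖z‖ := norm_neg z
        have hlow := (hKM (-z) hmem (by rwa [habs])).1
        rw [habs] at hlow
        rw [hGT' z hmem', norm_inv]
        have h0z : (0:ℝ) < ‖z‖ := by linarith
        have hpos : (0:ℝ) < ‖z‖ ^ (-K) := Real.rpow_pos_of_pos h0z _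
        have h2 : (‖φ 0 (-z)‖)⁻¹ ≤ (‖z‖ ^ (-K))⁻¹ :=
          inv_anti₀ hpos hlow.le
        rw [Real.rpow_neg h0z.le, inv_inv] at h2
        exact le_trans h2 hrpow
    obtain ⟨C₀, hC₀⟩ := (isCompact_closedBall (0:ℂ) (M' + 1)).exists_bound_of_continuousOn
      hGdiff.continuous.continuousOn
    refine ⟨max C₀ 1, KK, fun z => ?_⟩
    have h1le : (1:ℝ) ≤ (1 + ‖z‖) ^ KK := one_le_pow₀ (by linarith [norm_nonneg z])
    have hCpos : (0:ℝ) < max C₀ 1 := lt_of_lt_of_le one_pos (le_max_right _ _)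
    rcases le_or_gt (‖z‖) (M' + 1) with hcase | hcase
    · have hball : z ∈ Metric.closedBall (0:ℂ) (M' + 1) := by
        rw [Metric.mem_closedBall, dist_zero_right]
        exact hcase
      calc ‖G z‖ ≤ C₀ := hC₀ z hball
        _ ≤ max C₀ 1 := le_max_left _ _
        _ = max C₀ 1 * 1 := (mul_one _).symm
        _ ≤ max C₀ 1 * (1 + ‖z‖) ^ KK := by
            exact mul_le_mul_of_nonneg_left h1le hCpos.le
    · have hM1 : M' < ‖z‖ := by
        have : (0:ℝ) ≤ 1 := one_pos.le
        have hM0 : (1:ℝ) ≤ M' := le_max_right M 1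
        linarith
      have h3 : ‖z‖ ^ KK ≤ (1 + ‖z‖) ^ KK := by
        apply pow_le_pow_left₀ (norm_nonneg z)
        linarith
      calc ‖G z‖ ≤ ‖z‖ ^ KK := hbig z hM1
        _ ≤ (1 + ‖z‖) ^ KK := h3
        _ = 1 * (1 + ‖z‖) ^ KK := (one_mul _).symm
        _ ≤ max C₀ 1 * (1 + ‖z‖) ^ KK := by
            apply mul_le_mul_of_nonneg_right (le_max_right _ _)
            positivity
  obtain ⟨C, KK, hCB⟩ := hGbig
  have hGone : ∀ z : ℂ, G z = 1 := entire_reflection_eq_one hGdiff hG0 hreflG KK C hCB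
  -- conclusion
  intro n t ht
  have h1 : G t = Fglue v w φ t := Gfun_eq_F (Vreg_subset_Uset ht)
  rw [Fglue_eq hvw hjump ht] at h1
  rw [← h1, hGone]

end Master


/-- The conifold Riemann–Hilbert problem has at most one solution. -/
theorem conifoldRH_uniqueness
    (v w : ℂ) (hw : w ≠ 0) (hvw : ∀ n : ℤ, v + (n : ℂ) * w ≠ 0)
    (him : 0 < (v / w).im)
    (sol sol' : ConifoldRHSolution v w) :
    ∀ n : ℤ, ∀ t ∈ Vreg v w n, sol.B n t = sol'.B n t ∧ sol.D n t = sol'.D n t := by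
  -- the ratio families
  set φB : ℤ → ℂ → ℂ := fun n t => sol.B n t * (sol'.B n t)⁻¹ with hφB
  set φD : ℤ → ℂ → ℂ := fun n t => sol.D n t * (sol'.D n t)⁻¹ with hφD
  obtain ⟨k, hk, hgrS⟩ := sol.growth 0
  obtain ⟨k', hk', hgrS'⟩ := sol'.growth 0
  -- hypotheses of the master lemma, B case
  have hBdiff : ∀ n, DifferentiableOn ℂ (φB n) (Vreg v w n) := by
    intro n
    exact (sol.holoB n).mul ((sol'.holoB n).inv (sol'.neB n))
  have hBne : ∀ n, ∀ t ∈ Vreg v w n, φB n t ≠ 0 := by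
    intro n t ht
    exact mul_ne_zero (sol.neB n t ht) (inv_ne_zero (sol'.neB n t ht))
  have hBjump : ∀ n : ℤ, ∀ t ∈ Hplane v w n, φB (n + 1) t = φB n t := by
    intro n t ht
    have htV : t ∈ Vreg v w n := Hplane_subset_Vreg ht
    have htV' : t ∈ Vreg v w (n + 1) := Hplane_subset_Vreg_succ ht
    have hc : (1 - xfun v t * qfun w t ^ n) ≠ 0 := by
      intro h0
      apply sol.neB (n + 1) t htV'
      rw [sol.jumpB n t ht, h0]
      simp
    have hB' := sol'.neB n t htV
    show sol.B (n+1) t * (sol'.B (n+1) t)⁻¹ = sol.B n t * (sol'.B n t)⁻¹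
    rw [sol.jumpB n t ht, sol'.jumpB n t ht]
    field_simp
  have hBlim : ∀ S : Set ℂ, SectorShaped S → S ⊆ Vreg v w 0 →
      Filter.Tendsto (φB 0) (nhdsWithin 0 S) (nhds 1) := by
    intro S hS hsub
    have h1 := (sol.limB 0 S hS hsub).mul ((sol'.limB 0 S hS hsub).inv₀ one_ne_zero)
    simpa using h1
  have hBgrow : ∀ S : Set ℂ, SectorShaped S → S ⊆ Vreg v w 0 →
      ∃ K M : ℝ, ∀ t ∈ S, M < ‖t‖ →
        ‖t‖ ^ (-K) < ‖φB 0 t‖ ∧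
        ‖φB 0 t‖ < ‖t‖ ^ K := by
    intro S hS hsub
    obtain ⟨M, hM⟩ := hgrS S hS hsub
    obtain ⟨M', hM'⟩ := hgrS' S hS hsub
    refine ⟨k + k', max M M', fun t ht hta => ?_⟩
    have h1 := hM t ht (lt_of_le_of_lt (le_max_left M M') hta)
    have h2 := hM' t ht (lt_of_le_of_lt (le_max_right M M') hta)
    have htne : t ≠ 0 := Uset_ne_zero (Vreg_subset_Uset (hsub ht))
    have hta0 : (0:ℝ) < ‖t‖ := norm_pos_iff.mpr htne
    have he1 : ‖φB 0 t‖
        = ‖sol.B 0 t‖ * (‖sol'.B 0 t‖)⁻¹ := by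
      show ‖sol.B 0 t * (sol'.B 0 t)⁻¹‖ = _
      rw [norm_mul, norm_inv]
    have hBpos : (0:ℝ) < ‖sol.B 0 t‖ :=
      lt_trans (Real.rpow_pos_of_pos hta0 _) h1.1
    have hB'pos : (0:ℝ) < ‖sol'.B 0 t‖ :=
      lt_trans (Real.rpow_pos_of_pos hta0 _) h2.1
    constructor
    · -- lower bound
      have hl1 : ‖t‖ ^ (-k) < ‖sol.B 0 t‖ := h1.1
      have hl2 : ‖t‖ ^ (-k') < (‖sol'.B 0 t‖)⁻¹ := by
        rw [Real.rpow_neg hta0.le]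
        exact inv_strictAnti₀ hB'pos h2.2.1
      have heq : ‖t‖ ^ (-(k + k'))
          = ‖t‖ ^ (-k) * ‖t‖ ^ (-k') := by
        rw [← Real.rpow_add hta0]; ring_nf
      rw [he1, heq]
      exact mul_lt_mul'' hl1 hl2 (Real.rpow_nonneg hta0.le _) (Real.rpow_nonneg hta0.le _)
    · -- upper bound
      have hu1 : ‖sol.B 0 t‖ < ‖t‖ ^ k := h1.2.1
      have hu2 : (‖sol'.B 0 t‖)⁻¹ < ‖t‖ ^ k' := by
        rw [show (‖t‖ : ℝ) ^ k' = ((‖t‖ ^ (-k') : ℝ))⁻¹ by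
          rw [Real.rpow_neg hta0.le, inv_inv]]
        exact inv_strictAnti₀ (Real.rpow_pos_of_pos hta0 _) h2.1
      have heq : ‖t‖ ^ (k + k') = ‖t‖ ^ k * ‖t‖ ^ k' := by
        rw [← Real.rpow_add hta0]
      rw [he1, heq]
      exact mul_lt_mul'' hu1 hu2 (norm_nonneg _) (inv_nonneg.mpr (norm_nonneg _))
  have hBrefl : ∀ t ∈ negISigma0 v w, φB 0 t * φB 0 (-t) = 1 := by
    intro t ht
    obtain ⟨h0, hneg, _⟩ := negISigma0_props hw hvw him ht
    have hmem : t ∈ Vreg v w 0 := Or.inr h0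
    have hmemneg : -t ∈ Vreg v w 0 := Or.inl (by rwa [show (0:ℤ) - 1 = -1 by norm_num])
    have hEq : sol.B 0 t * sol.B 0 (-t) = sol'.B 0 t * sol'.B 0 (-t) :=
      (sol.reflB t ht).trans (sol'.reflB t ht).symm
    have hne1 := sol'.neB 0 t hmem
    have hne2 := sol'.neB 0 (-t) hmemneg
    show (sol.B 0 t * (sol'.B 0 t)⁻¹) * (sol.B 0 (-t) * (sol'.B 0 (-t))⁻¹) = 1
    field_simp
    linear_combination hEq
  have hBone := ratio_eq_one hw hvw him hBdiff hBne hBjump hBlim hBgrow hBrefl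
  -- hypotheses of the master lemma, D case
  have hDdiff : ∀ n, DifferentiableOn ℂ (φD n) (Vreg v w n) := by
    intro n
    exact (sol.holoD n).mul ((sol'.holoD n).inv (sol'.neD n))
  have hDne : ∀ n, ∀ t ∈ Vreg v w n, φD n t ≠ 0 := by
    intro n t ht
    exact mul_ne_zero (sol.neD n t ht) (inv_ne_zero (sol'.neD n t ht))
  have hDjump : ∀ n : ℤ, ∀ t ∈ Hplane v w n, φD (n + 1) t = φD n t := by
    intro n t ht
    have htV : t ∈ Vreg v w n := Hplane_subset_Vreg ht
    have htV' : t ∈ Vreg v w (n + 1) := Hplane_subset_Vreg_succ ht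
    have hc : ((1 - xfun v t * qfun w t ^ n) : ℂ) ^ (-n) ≠ 0 := by
      intro h0
      apply sol.neD (n + 1) t htV'
      rw [sol.jumpD n t ht, h0]
      simp
    have hD' := sol'.neD n t htV
    have hcc : ((1 - xfun v t * qfun w t ^ n) : ℂ) ^ n ≠ 0 := by
      by_cases hn : n = 0
      · subst hn; simp
      · apply zpow_ne_zero
        intro hc0
        apply hc
        rw [hc0, zero_zpow _ (neg_ne_zero.mpr hn)]
    show sol.D (n+1) t * (sol'.D (n+1) t)⁻¹ = sol.D n t * (sol'.D n t)⁻¹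
    rw [sol.jumpD n t ht, sol'.jumpD n t ht]
    field_simp
  have hDlim : ∀ S : Set ℂ, SectorShaped S → S ⊆ Vreg v w 0 →
      Filter.Tendsto (φD 0) (nhdsWithin 0 S) (nhds 1) := by
    intro S hS hsub
    have h1 := (sol.limD 0 S hS hsub).mul ((sol'.limD 0 S hS hsub).inv₀ one_ne_zero)
    simpa using h1
  have hDgrow : ∀ S : Set ℂ, SectorShaped S → S ⊆ Vreg v w 0 →
      ∃ K M : ℝ, ∀ t ∈ S, M < ‖t‖ →
        ‖t‖ ^ (-K) < ‖φD 0 t‖ ∧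
        ‖φD 0 t‖ < ‖t‖ ^ K := by
    intro S hS hsub
    obtain ⟨M, hM⟩ := hgrS S hS hsub
    obtain ⟨M', hM'⟩ := hgrS' S hS hsub
    refine ⟨k + k', max M M', fun t ht hta => ?_⟩
    have h1 := hM t ht (lt_of_le_of_lt (le_max_left M M') hta)
    have h2 := hM' t ht (lt_of_le_of_lt (le_max_right M M') hta)
    have htne : t ≠ 0 := Uset_ne_zero (Vreg_subset_Uset (hsub ht))
    have hta0 : (0:ℝ) < ‖t‖ := norm_pos_iff.mpr htne
    have he1 : ‖φD 0 t‖
        = ‖sol.D 0 t‖ * (‖sol'.D 0 t‖)⁻¹ := by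
      show ‖sol.D 0 t * (sol'.D 0 t)⁻¹‖ = _
      rw [norm_mul, norm_inv]
    have hB'pos : (0:ℝ) < ‖sol'.D 0 t‖ :=
      lt_trans (Real.rpow_pos_of_pos hta0 _) h2.2.2.1
    constructor
    · have hl1 : ‖t‖ ^ (-k) < ‖sol.D 0 t‖ := h1.2.2.1
      have hl2 : ‖t‖ ^ (-k') < (‖sol'.D 0 t‖)⁻¹ := by
        rw [Real.rpow_neg hta0.le]
        exact inv_strictAnti₀ hB'pos h2.2.2.2
      have heq : ‖t‖ ^ (-(k + k'))
          = ‖t‖ ^ (-k) * ‖t‖ ^ (-k') := by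
        rw [← Real.rpow_add hta0]; ring_nf
      rw [he1, heq]
      exact mul_lt_mul'' hl1 hl2 (Real.rpow_nonneg hta0.le _) (Real.rpow_nonneg hta0.le _)
    · have hu1 : ‖sol.D 0 t‖ < ‖t‖ ^ k := h1.2.2.2
      have hu2 : (‖sol'.D 0 t‖)⁻¹ < ‖t‖ ^ k' := by
        rw [show (‖t‖ : ℝ) ^ k' = ((‖t‖ ^ (-k') : ℝ))⁻¹ by
          rw [Real.rpow_neg hta0.le, inv_inv]]
        exact inv_strictAnti₀ (Real.rpow_pos_of_pos hta0 _) h2.2.2.1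
      have heq : ‖t‖ ^ (k + k') = ‖t‖ ^ k * ‖t‖ ^ k' := by
        rw [← Real.rpow_add hta0]
      rw [he1, heq]
      exact mul_lt_mul'' hu1 hu2 (norm_nonneg _) (inv_nonneg.mpr (norm_nonneg _))
  have hDrefl : ∀ t ∈ negISigma0 v w, φD 0 t * φD 0 (-t) = 1 := by
    intro t ht
    obtain ⟨h0, hneg, _⟩ := negISigma0_props hw hvw him ht
    have hmem : t ∈ Vreg v w 0 := Or.inr h0
    have hmemneg : -t ∈ Vreg v w 0 := Or.inl (by rwa [show (0:ℤ) - 1 = -1 by norm_num])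
    have hEq : sol.D 0 t * sol.D 0 (-t) = sol'.D 0 t * sol'.D 0 (-t) :=
      (sol.reflD t ht).trans (sol'.reflD t ht).symm
    have hne1 := sol'.neD 0 t hmem
    have hne2 := sol'.neD 0 (-t) hmemneg
    show (sol.D 0 t * (sol'.D 0 t)⁻¹) * (sol.D 0 (-t) * (sol'.D 0 (-t))⁻¹) = 1
    field_simp
    linear_combination hEq
  have hDone := ratio_eq_one hw hvw him hDdiff hDne hDjump hDlim hDgrow hDrefl
  intro n t ht
  constructor
  · have h1 : φB n t = 1 := hBone n t ht
    have h2 : sol.B n t * (sol'.B n t)⁻¹ = 1 := h1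
    exact (mul_inv_eq_one₀ (sol'.neB n t ht)).mp h2
  · have h1 : φD n t = 1 := hDone n t ht
    have h2 : sol.D n t * (sol'.D n t)⁻¹ = 1 := h1
    exact (mul_inv_eq_one₀ (sol'.neD n t ht)).mp h2
end
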